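/- arXiv:1206.6142 — 8 statements merged into one kernel-verified Lean document; each statement's English description precedes it below -/
import Mathlib

section
/- Let C1, C2, C3, C4 be four circles in the Euclidean plane EuclideanSpace ℝ (Fin 2), with centers o1, o2, o3, o4 and radii r1, r2, r3, r4 > 0, such that cyclically consecutive circles are orthogonal: dist o1 o2 ^ 2 = r1^2 + r2^2, dist o2 o3 ^ 2 = r2^2 + r3^2, dist o3 o4 ^ 2 = r3^2 + r4^2, and dist o4 o1 ^ 2 = r4^2 + r1^2. Let p be a common point of C4 and C1, let q be a common point of C1 and C2, and let s be a common point of C3 and C4, and assume that p lies neither on C2 nor on C3 (dist p o2 ≠ r2 and dist p o3 ≠ r3). Then there exists a common point r of C2 and C3 (dist r o2 = r2 and dist r o3 = r3) such that the four points p, q, r, s either lie on a common circle or are collinear, i.e., EuclideanGeometry.Cospherical {p, q, r, s} ∨ Collinear ℝ {p, q, r, s}. -/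
set_option maxHeartbeats 2000000

private lemma sqeq {a b : ℝ} (ha : 0 ≤ a) (hb : 0 ≤ b) (h : a^2 = b^2) : a = b := by
  nlinarith

private lemma dist_sq (x y : EuclideanSpace ℝ (Fin 2)) :
    dist x y ^ 2 = (x 0 - y 0)^2 + (x 1 - y 1)^2 := by
  rw [EuclideanSpace.dist_eq, Real.sq_sqrt (by positivity)]
  simp [Fin.sum_univ_two, Real.dist_eq, sq_abs]

private lemma pt_ext (x y : EuclideanSpace ℝ (Fin 2)) (h0 : x 0 = y 0) (h1 : x 1 = y 1) :
    x = y := by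
  ext i
  fin_cases i <;> assumption

private lemma sum_sq_eq_zero {x y : ℝ} (h : x^2+y^2 = 0) : x = 0 ∧ y = 0 := by
  constructor <;> nlinarith [sq_nonneg x, sq_nonneg y]

private lemma core_chord (x1 x2 y1 y2 m1 m2 w1 w2 N T r2 r3 : ℝ)
    (hw1 : w1 = y1-m1-x1) (hw2 : w2 = y2-m2-x2)
    (hN : N = w1^2+w2^2) (hT : T = -2*(x1*w1+x2*w2))
    (h1 : x1^2+x2^2 = r2) (h2 : y1^2+y2^2 = r3) (h3 : m1^2+m2^2 = r2+r3)
    (h4 : x1*y1+x2*y2 = 0) :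
    (N*(x1+m1)+T*w1)^2 + (N*(x2+m2)+T*w2)^2 = N^2*r3 := by
  linear_combination (-1*m2^4 - 2*m1^2*m2^2 - 1*m1^4 + 4*y2*m2^3 + 4*y2*m1^2*m2 - 6*y2^2*m2^2 - 2*y2^2*m1^2 + 4*y2^3*m2 - 1*y2^4 + 4*y1*m1*m2^2 + 4*y1*m1^3 - 8*y1*y2*m1*m2 + 4*y1*y2^2*m1 - 2*y1^2*m2^2 - 6*y1^2*m1^2 + 4*y1^2*y2*m2 - 2*y1^2*y2^2 + 4*y1^3*m1 - 1*y1^4 - 2*x2*m2^3 - 2*x2*m1^2*m2 + 4*x2*y2*m2^2 + 2*x2*y2^2*m2 - 4*x2*y2^3 + 4*x2*y1*m1*m2 + 4*x2*y1*y2*m1 - 2*x2*y1^2*m2 - 12*x2*y1^2*y2 - 4*x2^2*y2*m2 + 4*x2^2*y2^2 + 2*x2^3*m2 - 4*x2^3*y2 + x2^4 - 2*x1*m1*m2^2 - 2*x1*m1^3 + 4*x1*y2*m1*m2 - 2*x1*y2^2*m1 + 4*x1*y1*m1^2 + 4*x1*y1*y2*m2 - 4*x1*y1*y2^2 + 2*x1*y1^2*m1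 - 12*x1*y1^3 - 4*x1*x2*y2*m1 - 4*x1*x2*y1*m2 + 16*x1*x2*y1*y2 + 2*x1*x2^2*m1 - 4*x1*x2^2*y1 - 4*x1^2*y1*m1 + 12*x1^2*y1^2 + 2*x1^2*x2*m2 - 4*x1^2*x2*y2 + 2*x1^2*x2^2 + 2*x1^3*m1 - 4*x1^3*y1 + x1^4) * h1 + (2*x2*m2^3 + 2*x2*m1^2*m2 - 8*x2*y2*m2^2 - 4*x2*y2*m1^2 + 14*x2*y2^2*m2 - 8*x2*y2^3 - 4*x2*y1*m1*m2 + 12*x2*y1*y2*m1 + 2*x2*y1^2*m2 - 16*x2*y1^2*y2 + 6*x2^2*m2^2 + 2*x2^2*m1^2 - 16*x2^2*y2*m2 + 10*x2^2*y2^2 - 4*x2^2*y1*m1 + 2*x2^2*y1^2 + 6*x2^3*m2 - 8*x2^3*y2 + 2*x2^4 + 2*x1*m1*m2^2 + 2*x1*m1^3 - 4*x1*y2*m1*m2 + 2*x1*y2^2*m1 - 4*x1*y1*m2^2 - 8*x1*y1*m1^2 + 12*x1*y1*y2*m2 - 8*x1*y1*y2^2 + 14*x1*y1^2*m1 - 16*x1*y1^3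 + 8*x1*x2*m1*m2 - 12*x1*x2*y2*m1 - 12*x1*x2*y1*m2 + 24*x1*x2*y1*y2 + 6*x1*x2^2*m1 - 8*x1*x2^2*y1 + 2*x1^2*m2^2 + 6*x1^2*m1^2 - 4*x1^2*y2*m2 + 2*x1^2*y2^2 - 16*x1^2*y1*m1 + 18*x1^2*y1^2 + 6*x1^2*x2*m2 - 8*x1^2*x2*y2 + 4*x1^2*x2^2 + 6*x1^3*m1 - 8*x1^3*y1 + 2*x1^4) * h2 + (m2^4 + 2*m1^2*m2^2 + m1^4 - 4*y2*m2^3 - 4*y2*m1^2*m2 + 6*y2^2*m2^2 + 2*y2^2*m1^2 - 4*y2^3*m2 + y2^4 - 4*y1*m1*m2^2 - 4*y1*m1^3 + 8*y1*y2*m1*m2 - 4*y1*y2^2*m1 + 2*y1^2*m2^2 + 6*y1^2*m1^2 - 4*y1^2*y2*m2 + 2*y1^2*y2^2 - 4*y1^3*m1 + y1^4 + 2*x2*m2^3 + 2*x2*m1^2*m2 - 4*x2*y2*m2^2 - 2*x2*y2^2*m2 + 4*x2*y2^3 - 4*x2*y1*m1*m2 - 4*x2*y1*y2*m1 + 2*x2*y1^2*m2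 + 12*x2*y1^2*y2 + 4*x2^2*y2*m2 - 4*x2^2*y2^2 - 2*x2^3*m2 + 4*x2^3*y2 - 1*x2^4 + 2*x1*m1*m2^2 + 2*x1*m1^3 - 4*x1*y2*m1*m2 + 2*x1*y2^2*m1 - 4*x1*y1*m1^2 - 4*x1*y1*y2*m2 + 4*x1*y1*y2^2 - 2*x1*y1^2*m1 + 12*x1*y1^3 + 4*x1*x2*y2*m1 + 4*x1*x2*y1*m2 - 16*x1*x2*y1*y2 - 2*x1*x2^2*m1 + 4*x1*x2^2*y1 + 4*x1^2*y1*m1 - 12*x1^2*y1^2 - 2*x1^2*x2*m2 + 4*x1^2*x2*y2 - 2*x1^2*x2^2 - 2*x1^3*m1 + 4*x1^3*y1 - 1*x1^4) * h3 + (8*y2^2*m2^2 - 16*y2^3*m2 + 8*y2^4 + 16*y1*y2*m1*m2 - 16*y1*y2^2*m1 - 8*y1^2*m2^2 - 16*y1^2*y2*m2 + 24*y1^2*y2^2 - 16*y1^3*m1 + 16*y1^4 - 8*x2*y2*m2^2 + 16*x2*y2^2*m2 - 8*x2*y2^3 - 8*x2*y1*m1*m2 + 8*x2*y1*y2*m1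 + 8*x2*y1^2*m2 - 8*x2*y1^2*y2 - 8*x2^2*y2*m2 + 8*x2^2*y2^2 - 8*x2^2*y1*m1 + 16*x2^2*y1^2 - 8*x1*y2*m1*m2 + 8*x1*y2^2*m1 + 8*x1*y1*m2^2 + 8*x1*y1*y2*m2 - 16*x1*y1*y2^2 + 16*x1*y1^2*m1 - 16*x1*y1^3 - 8*x1*x2^2*y1 - 8*x1^2*y2*m2 + 8*x1^2*y2^2 - 8*x1^2*y1*m1 + 16*x1^2*y1^2 - 8*x1^3*y1) * h4 + (w2^2*T + w1^2*T + 2*m2*w2*N + 2*m1*w1*N + 2*x2*w2*N - 2*x2*w2^3 - 2*x2*w1^2*w2 + 2*x1*w1*N - 2*x1*w1*w2^2 - 2*x1*w1^3) * hT + (-1*r3*N - 1*r3*w2^2 - 1*r3*w1^2 + m2^2*N + m2^2*w2^2 + m2^2*w1^2 + m1^2*N + m1^2*w2^2 + m1^2*w1^2 + 2*x2*m2*N - 2*x2*m2*w2^2 + 2*x2*m2*w1^2 - 4*x2*m1*w1*w2 + x2^2*N - 3*x2^2*w2^2 + x2^2*w1^2 - 4*x1*m2*w1*w2 + 2*x1*m1*N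 + 2*x1*m1*w2^2 - 2*x1*m1*w1^2 - 8*x1*x2*w1*w2 + x1^2*N + x1^2*w2^2 - 3*x1^2*w1^2) * hN + (-2*r3*w1*w2^2 - 1*r3*w1^3 + 2*m2^2*w1*w2^2 + m2^2*w1^3 + 2*m1*r3*w2^2 + m1*r3*w1^2 - 2*m1*m2^2*w2^2 - 1*m1*m2^2*w1^2 + 2*m1^2*w1*w2^2 + m1^2*w1^3 - 1*m1^2*r3*w1 + m1^2*m2^2*w1 - 2*m1^3*w2^2 - 1*m1^3*w1^2 + m1^3*r3 - 1*m1^3*m2^2 + m1^4*w1 - 1*m1^5 - 2*y1*r3*w2^2 - 1*y1*r3*w1^2 + 2*y1*m2^2*w2^2 + y1*m2^2*w1^2 + 2*y1*m1*r3*w1 - 2*y1*m1*m2^2*w1 + 2*y1*m1^2*w2^2 + y1*m1^2*w1^2 - 3*y1*m1^2*r3 + 3*y1*m1^2*m2^2 - 2*y1*m1^3*w1 + 3*y1*m1^4 - 1*y1^2*r3*w1 + y1^2*m2^2*w1 + 3*y1^2*m1*r3 - 3*y1^2*m1*m2^2 + y1^2*m1^2*w1 - 3*y1^2*m1^3 -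 1*y1^3*r3 + y1^3*m2^2 + y1^3*m1^2 + 2*x2*m2*w1^3 - 4*x2*m1*w2^3 - 4*x2*m1*w1^2*w2 - 2*x2*m1*m2*w1^2 + 4*x2*m1^2*w1*w2 + 2*x2*m1^2*m2*w1 - 4*x2*m1^3*w2 - 2*x2*m1^3*m2 + 2*x2*y1*m2*w1^2 - 4*x2*y1*m1*w1*w2 - 4*x2*y1*m1*m2*w1 + 8*x2*y1*m1^2*w2 + 6*x2*y1*m1^2*m2 + 2*x2*y1^2*m2*w1 - 4*x2*y1^2*m1*w2 - 6*x2*y1^2*m1*m2 + 2*x2*y1^3*m2 + 2*x2^2*w1*w2^2 + x2^2*w1^3 - 2*x2^2*m1*w2^2 - 1*x2^2*m1*w1^2 + x2^2*m1^2*w1 - 1*x2^2*m1^3 + 2*x2^2*y1*w2^2 + x2^2*y1*w1^2 - 2*x2^2*y1*m1*w1 + 3*x2^2*y1*m1^2 + x2^2*y1^2*w1 - 3*x2^2*y1^2*m1 + x2^2*y1^3 + 2*x1*r3*w2^2 + x1*r3*w1^2 - 4*x1*m2*w2^3 - 4*x1*m2*w1^2*w2 - 2*x1*m2^2*w2^2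 - 1*x1*m2^2*w1^2 - 2*x1*m1*w1^3 - 2*x1*m1*r3*w1 + 4*x1*m1*m2*w1*w2 + 2*x1*m1*m2^2*w1 - 2*x1*m1^2*w2^2 + x1*m1^2*w1^2 + 3*x1*m1^2*r3 - 4*x1*m1^2*m2*w2 - 3*x1*m1^2*m2^2 - 1*x1*m1^4 + 2*x1*y1*r3*w1 - 4*x1*y1*m2*w1*w2 - 2*x1*y1*m2^2*w1 - 2*x1*y1*m1*w1^2 - 6*x1*y1*m1*r3 + 8*x1*y1*m1*m2*w2 + 6*x1*y1*m1*m2^2 + 2*x1*y1*m1^2*w1 + 3*x1*y1^2*r3 - 4*x1*y1^2*m2*w2 - 3*x1*y1^2*m2^2 - 2*x1*y1^2*m1*w1 + 3*x1*y1^2*m1^2 - 2*x1*y1^3*m1 - 2*x1*x2*m2*w1^2 + 4*x1*x2*m1*w1*w2 + 4*x1*x2*m1*m2*w1 - 8*x1*x2*m1^2*w2 - 6*x1*x2*m1^2*m2 - 4*x1*x2*y1*m2*w1 + 8*x1*x2*y1*m1*w2 + 12*x1*x2*y1*m1*m2 - 6*x1*x2*y1^2*m2 - 2*x1*x2^2*w2^2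 - 1*x1*x2^2*w1^2 + 2*x1*x2^2*m1*w1 - 3*x1*x2^2*m1^2 - 2*x1*x2^2*y1*w1 + 6*x1*x2^2*y1*m1 - 3*x1*x2^2*y1^2 + 2*x1^2*w1*w2^2 + x1^2*w1^3 - 1*x1^2*r3*w1 + 4*x1^2*m2*w1*w2 + x1^2*m2^2*w1 - 2*x1^2*m1*w2^2 + x1^2*m1*w1^2 + 3*x1^2*m1*r3 - 8*x1^2*m1*m2*w2 - 3*x1^2*m1*m2^2 - 2*x1^2*m1^2*w1 + 2*x1^2*m1^3 + 2*x1^2*y1*w2^2 + x1^2*y1*w1^2 - 3*x1^2*y1*r3 + 8*x1^2*y1*m2*w2 + 3*x1^2*y1*m2^2 + 2*x1^2*y1*m1*w1 - 6*x1^2*y1*m1^2 + x1^2*y1^2*w1 + 3*x1^2*y1^2*m1 + x1^2*y1^3 + 2*x1^2*x2*m2*w1 - 4*x1^2*x2*m1*w2 - 6*x1^2*x2*m1*m2 + 6*x1^2*x2*y1*m2 + x1^2*x2^2*w1 - 3*x1^2*x2^2*m1 + 3*x1^2*x2^2*y1 - 2*x1^3*w2^2 - 1*x1^3*w1^2 +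 x1^3*r3 - 4*x1^3*m2*w2 - 1*x1^3*m2^2 + 2*x1^3*m1^2 - 2*x1^3*y1*w1 - 3*x1^3*y1^2 - 2*x1^3*x2*m2 - 1*x1^3*x2^2 + x1^4*w1 - 1*x1^4*m1 + 3*x1^4*y1 - 1*x1^5) * hw1 + (-1*r3*w2^3 + m2*r3*w2^2 + m2^2*w2^3 - 1*m2^2*r3*w2 - 1*m2^3*w2^2 + m2^3*r3 + m2^4*w2 - 1*m2^5 + m1^2*w2^3 - 2*m1^2*r3*w2 - 1*m1^2*m2*w2^2 + 2*m1^2*m2*r3 + 3*m1^2*m2^2*w2 - 3*m1^2*m2^3 + 2*m1^4*w2 - 2*m1^4*m2 - 1*y2*r3*w2^2 + 2*y2*m2*r3*w2 + y2*m2^2*w2^2 - 3*y2*m2^2*r3 - 2*y2*m2^3*w2 + 3*y2*m2^4 + y2*m1^2*w2^2 - 2*y2*m1^2*r3 - 2*y2*m1^2*m2*w2 + 5*y2*m1^2*m2^2 + 2*y2*m1^4 - 1*y2^2*r3*w2 + 3*y2^2*m2*r3 + y2^2*m2^2*w2 - 3*y2^2*m2^3 + y2^2*m1^2*w2 - 3*y2^2*m1^2*m2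 - 1*y2^3*r3 + y2^3*m2^2 + y2^3*m1^2 + 4*y1*m1*r3*w2 - 4*y1*m1*m2*r3 - 4*y1*m1*m2^2*w2 + 4*y1*m1*m2^3 - 4*y1*m1^3*w2 + 4*y1*m1^3*m2 + 4*y1*y2*m1*r3 - 4*y1*y2*m1*m2^2 - 4*y1*y2*m1^3 - 2*y1^2*r3*w2 + 2*y1^2*m2*r3 + 2*y1^2*m2^2*w2 - 2*y1^2*m2^3 + 2*y1^2*m1^2*w2 - 2*y1^2*m1^2*m2 - 2*y1^2*y2*r3 + 2*y1^2*y2*m2^2 + 2*y1^2*y2*m1^2 + x2*r3*w2^2 - 2*x2*m2*w2^3 - 2*x2*m2*r3*w2 + x2*m2^2*w2^2 + 3*x2*m2^2*r3 - 1*x2*m2^4 + 3*x2*m1^2*w2^2 + 2*x2*m1^2*r3 - 2*x2*m1^2*m2*w2 - 1*x2*m1^2*m2^2 + 2*x2*m1^4 + 2*x2*y2*r3*w2 - 2*x2*y2*m2*w2^2 - 6*x2*y2*m2*r3 + 2*x2*y2*m2^2*w2 + 2*x2*y2*m1^2*w2 - 2*x2*y2*m1^2*m2 + 3*x2*y2^2*r3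 - 2*x2*y2^2*m2*w2 + 3*x2*y2^2*m2^2 + x2*y2^2*m1^2 - 2*x2*y2^3*m2 - 4*x2*y1*m1*w2^2 - 4*x2*y1*m1*r3 + 4*x2*y1*m1*m2*w2 - 8*x2*y1*m1^3 - 4*x2*y1*y2*m1*w2 + 8*x2*y1*y2*m1*m2 - 4*x2*y1*y2^2*m1 + 2*x2*y1^2*r3 - 2*x2*y1^2*m2^2 + 10*x2*y1^2*m1^2 - 4*x2*y1^3*m1 + x2^2*w2^3 - 1*x2^2*r3*w2 + x2^2*m2*w2^2 + 3*x2^2*m2*r3 - 2*x2^2*m2^2*w2 + 2*x2^2*m2^3 - 1*x2^2*m1^2*w2 + 3*x2^2*m1^2*m2 + x2^2*y2*w2^2 - 3*x2^2*y2*r3 + 2*x2^2*y2*m2*w2 - 6*x2^2*y2*m2^2 - 3*x2^2*y2*m1^2 + x2^2*y2^2*w2 + 3*x2^2*y2^2*m2 + x2^2*y2^3 - 4*x2^2*y1*m1*m2 + 4*x2^2*y1*y2*m1 + 2*x2^2*y1^2*w2 - 2*x2^2*y1^2*m2 + 2*x2^2*y1^2*y2 - 1*x2^3*w2^2 + x2^3*r3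 + 2*x2^3*m2^2 + x2^3*m1^2 - 2*x2^3*y2*w2 - 3*x2^3*y2^2 - 2*x2^3*y1^2 + x2^4*w2 - 1*x2^4*m2 + 3*x2^4*y2 - 1*x2^5 + 2*x1*m1*w2^3 - 4*x1*m1*r3*w2 + 2*x1*m1*m2*w2^2 + 4*x1*m1*m2*r3 + 2*x1*m1*m2^2*w2 - 2*x1*m1*m2^3 + 4*x1*m1^3*w2 + 2*x1*y2*m1*w2^2 - 4*x1*y2*m1*r3 + 2*x1*y2*m1*m2^2 + 4*x1*y2*m1^3 + 2*x1*y2^2*m1*w2 - 2*x1*y2^2*m1*m2 + 2*x1*y2^3*m1 + 4*x1*y1*r3*w2 - 4*x1*y1*m2*w2^2 - 4*x1*y1*m2*r3 - 4*x1*y1*m1^2*w2 - 8*x1*y1*m1^2*m2 + 4*x1*y1*y2*r3 - 4*x1*y1*y2*m2*w2 + 4*x1*y1*y2*m2^2 - 4*x1*y1*y2*m1^2 - 4*x1*y1*y2^2*m2 + 12*x1*y1^2*m1*m2 - 4*x1*y1^3*m2 + 2*x1*x2*m1*w2^2 + 4*x1*x2*m1*r3 - 4*x1*x2*m1*m2*w2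 + 2*x1*x2*m1*m2^2 + 8*x1*x2*m1^3 - 4*x1*x2*y2*m1*m2 - 2*x1*x2*y2^2*m1 - 4*x1*x2*y1*r3 + 4*x1*x2*y1*m2*w2 - 4*x1*x2*y1*m2^2 - 20*x1*x2*y1*m1^2 + 8*x1*x2*y1*y2*m2 + 12*x1*x2*y1^2*m1 + 2*x1*x2^2*m1*w2 + 2*x1*x2^2*m1*m2 + 2*x1*x2^2*y2*m1 - 4*x1*x2^2*y1*w2 - 4*x1*x2^2*y1*y2 - 2*x1*x2^3*m1 + 4*x1*x2^3*y1 + x1^2*w2^3 - 2*x1^2*r3*w2 + 3*x1^2*m2*w2^2 + 2*x1^2*m2*r3 - 1*x1^2*m2^2*w2 + x1^2*m2^3 + 4*x1^2*m1^2*w2 + 8*x1^2*m1^2*m2 + x1^2*y2*w2^2 - 2*x1^2*y2*r3 + 2*x1^2*y2*m2*w2 - 3*x1^2*y2*m2^2 + 4*x1^2*y2*m1^2 + x1^2*y2^2*w2 + x1^2*y2^2*m2 + x1^2*y2^3 - 4*x1^2*y1*m1*w2 - 20*x1^2*y1*m1*m2 - 4*x1^2*y1*y2*m1 + 2*x1^2*y1^2*w2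 + 10*x1^2*y1^2*m2 + 2*x1^2*y1^2*y2 - 1*x1^2*x2*w2^2 + 2*x1^2*x2*r3 - 2*x1^2*x2*m2*w2 + 3*x1^2*x2*m2^2 + 8*x1^2*x2*m1^2 - 2*x1^2*x2*y2*w2 - 2*x1^2*x2*y2*m2 - 3*x1^2*x2*y2^2 - 8*x1^2*x2*y1*m1 - 2*x1^2*x2*y1^2 + 3*x1^2*x2^2*w2 - 1*x1^2*x2^2*m2 + 5*x1^2*x2^2*y2 - 3*x1^2*x2^3 + 4*x1^3*m1*w2 + 8*x1^3*m1*m2 + 4*x1^3*y2*m1 - 4*x1^3*y1*w2 - 8*x1^3*y1*m2 - 4*x1^3*y1*y2 + 4*x1^3*x2*y1 + 2*x1^4*w2 + 2*x1^4*m2 + 2*x1^4*y2 - 2*x1^4*x2) * hw2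

private lemma scalar_main (a1 a2 b1 b2 c1 c2 d1 d2 q1 q2 s1 s2 e1 e2 e3 e4 : ℝ)
    (he1 : 0 < e1) (he2 : 0 < e2) (he3 : 0 < e3) (he4 : 0 < e4)
    (H1 : a1^2+a2^2 = e1^2) (H4 : d1^2+d2^2 = e4^2)
    (H12 : (a1-b1)^2+(a2-b2)^2 = e1^2+e2^2)
    (H23 : (b1-c1)^2+(b2-c2)^2 = e2^2+e3^2)
    (H34 : (c1-d1)^2+(c2-d2)^2 = e3^2+e4^2)
    (H41 : (d1-a1)^2+(d2-a2)^2 = e4^2+e1^2)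
    (Hq1 : (q1-a1)^2+(q2-a2)^2 = e1^2)
    (Hq2 : (q1-b1)^2+(q2-b2)^2 = e2^2)
    (Hs3 : (s1-c1)^2+(s2-c2)^2 = e3^2)
    (Hs4 : (s1-d1)^2+(s2-d2)^2 = e4^2)
    (k2n : b1^2+b2^2 ≠ e2^2) (k3n : c1^2+c2^2 ≠ e3^2) :
    ∃ rv1 rv2 : ℝ, (rv1-b1)^2+(rv2-b2)^2 = e2^2 ∧ (rv1-c1)^2+(rv2-c2)^2 = e3^2 ∧
      ((∃ z1 z2 : ℝ, (q1-z1)^2+(q2-z2)^2 = z1^2+z2^2 ∧ (rv1-z1)^2+(rv2-z2)^2 = z1^2+z2^2 ∧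
          (s1-z1)^2+(s2-z2)^2 = z1^2+z2^2) ∨
       (∃ v1 v2 t1 t2 t3 : ℝ, q1 = t1*v1 ∧ q2 = t1*v2 ∧ rv1 = t2*v1 ∧ rv2 = t2*v2 ∧
          s1 = t3*v1 ∧ s2 = t3*v2)) := by
  by_cases hqs : q1 = s1 ∧ q2 = s2
  · obtain ⟨hx, hy⟩ := hqs
    refine ⟨q1, q2, by linear_combination Hq2, ?_, Or.inr ⟨q1, q2, 1, 1, 1, by ring, by ring,
      by ring, by ring, by linear_combination -hx, by linear_combination -hy⟩⟩
    linear_combination Hs3 + (q1+s1-2*c1)*hx + (q2+s2-2*c2)*hy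
  · obtain ⟨al, hal⟩ : ∃ x : ℝ, x = q1^2+q2^2 := ⟨_, rfl⟩
    obtain ⟨be, hbe⟩ : ∃ x : ℝ, x = s1^2+s2^2 := ⟨_, rfl⟩
    obtain ⟨k2, hk2⟩ : ∃ x : ℝ, x = b1^2+b2^2 - e2^2 := ⟨_, rfl⟩
    obtain ⟨k3, hk3⟩ : ∃ x : ℝ, x = c1^2+c2^2 - e3^2 := ⟨_, rfl⟩
    obtain ⟨V1, hV1⟩ : ∃ x : ℝ, x = al*s1 - be*q1 := ⟨_, rfl⟩
    obtain ⟨V2, hV2⟩ : ∃ x : ℝ, x = al*s2 - be*q2 := ⟨_, rfl⟩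
    obtain ⟨NV, hNV⟩ : ∃ x : ℝ, x = V1^2+V2^2 := ⟨_, rfl⟩
    obtain ⟨G1, hG1⟩ : ∃ x : ℝ, x = al*b1 - k2*q1 := ⟨_, rfl⟩
    obtain ⟨G2, hG2⟩ : ∃ x : ℝ, x = al*b2 - k2*q2 := ⟨_, rfl⟩
    obtain ⟨GV, hGV⟩ : ∃ x : ℝ, x = G1*V1 + G2*V2 := ⟨_, rfl⟩
    obtain ⟨U1, hU1⟩ : ∃ x : ℝ, x = k2*NV*q1 + 2*GV*V1 := ⟨_, rfl⟩
    obtain ⟨U2, hU2⟩ : ∃ x : ℝ, x = k2*NV*q2 + 2*GV*V2 := ⟨_, rfl⟩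
    obtain ⟨NU, hNU⟩ : ∃ x : ℝ, x = U1^2+U2^2 := ⟨_, rfl⟩
    obtain ⟨CRS, hCRS⟩ : ∃ x : ℝ, x = q2*V1 - q1*V2 := ⟨_, rfl⟩
    obtain ⟨xx1, hxx1⟩ : ∃ x : ℝ, x = -(be*k3*G1) := ⟨_, rfl⟩
    obtain ⟨xx2, hxx2⟩ : ∃ x : ℝ, x = -(be*k3*G2) := ⟨_, rfl⟩
    obtain ⟨yy1, hyy1⟩ : ∃ x : ℝ, x = al*k2*(k3*s1-be*c1) := ⟨_, rfl⟩
    obtain ⟨yy2, hyy2⟩ : ∃ x : ℝ, x = al*k2*(k3*s2-be*c2) := ⟨_, rfl⟩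
    obtain ⟨mm1, hmm1⟩ : ∃ x : ℝ, x = al*be*(k3*b1-k2*c1) := ⟨_, rfl⟩
    obtain ⟨mm2, hmm2⟩ : ∃ x : ℝ, x = al*be*(k3*b2-k2*c2) := ⟨_, rfl⟩
    obtain ⟨ww1, hww1⟩ : ∃ x : ℝ, x = yy1 - mm1 - xx1 := ⟨_, rfl⟩
    obtain ⟨ww2, hww2⟩ : ∃ x : ℝ, x = yy2 - mm2 - xx2 := ⟨_, rfl⟩
    obtain ⟨NN, hNN⟩ : ∃ x : ℝ, x = ww1^2+ww2^2 := ⟨_, rfl⟩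
    obtain ⟨TT, hTT⟩ : ∃ x : ℝ, x = -2*(xx1*ww1+xx2*ww2) := ⟨_, rfl⟩
    obtain ⟨F1, hF1⟩ : ∃ x : ℝ, x = NN*(xx1+mm1)+TT*ww1 := ⟨_, rfl⟩
    obtain ⟨F2, hF2⟩ : ∃ x : ℝ, x = NN*(xx2+mm2)+TT*ww2 := ⟨_, rfl⟩
    have k2ne : k2 ≠ 0 := by rw [hk2]; exact sub_ne_zero.mpr k2n
    have k3ne : k3 ≠ 0 := by rw [hk3]; exact sub_ne_zero.mpr k3n
    have alne : al ≠ 0 := by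
      intro h
      have hsum : q1^2+q2^2 = 0 := by rw [← hal]; exact h
      obtain ⟨h1, h2⟩ := sum_sq_eq_zero hsum
      exact k2n (by linear_combination Hq2 + (2*b1-q1)*h1 + (2*b2-q2)*h2)
    have bene : be ≠ 0 := by
      intro h
      have hsum : s1^2+s2^2 = 0 := by rw [← hbe]; exact h
      obtain ⟨h1, h2⟩ := sum_sq_eq_zero hsum
      exact k3n (by linear_combination Hs3 + (2*c1-s1)*h1 + (2*c2-s2)*h2)
    have E1 : 2*(q1*a1+q2*a2) = al := by linear_combination (1) * H1 + (-1) * Hq1 + (-1) * hal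
    have E2 : 2*(q1*b1+q2*b2) = al+k2 := by linear_combination (-1) * Hq2 + (-1) * hal + (-1) * hk2
    have E3 : 2*(s1*d1+s2*d2) = be := by linear_combination (1) * H4 + (-1) * Hs4 + (-1) * hbe
    have E4 : 2*(s1*c1+s2*c2) = be+k3 := by linear_combination (-1) * Hs3 + (-1) * hbe + (-1) * hk3
    have E5 : 2*(a1*b1+a2*b2) = k2 := by linear_combination (1) * H1 + (-1) * H12 + (-1) * hk2
    have E6 : 2*(c1*d1+c2*d2) = k3 := by linear_combination (1) * H4 + (-1) * H34 + (-1) * hk3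
    have E7 : 2*(b1*c1+b2*c2) = k2+k3 := by linear_combination (-1) * H23 + (-1) * hk2 + (-1) * hk3
    have E8 : a1*d1+a2*d2 = 0 := by linear_combination ((1/2)) * H1 + ((1/2)) * H4 + ((-1/2)) * H41
    have T1 : G1^2+G2^2 = e2^2*al^2 := by linear_combination (-1*al*k2) * E2 + (G1 - 1*q1*k2 + b1*al) * hG1 + (G2 - 1*q2*k2 + b2*al) * hG2 + (-1*k2^2 - 1*al*k2 - 1*e2^2*al - 1*q2^2*k2 - 1*q2^2*e2^2 - 1*q1^2*k2 - 1*q1^2*e2^2 + b2^2*al + b2^2*q2^2 + b2^2*q1^2 + b1^2*al + b1^2*q2^2 + b1^2*q1^2) * hal + (-1*q2^4 - 2*q1^2*q2^2 - 1*q1^4) * hk2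
    have T2 : (k3*s1-be*c1)^2+(k3*s2-be*c2)^2 = e3^2*be^2 := by linear_combination (-1*be*k3) * E4 + (-1*k3^2 - 1*be*k3 - 1*e3^2*be - 1*s2^2*k3 - 1*s2^2*e3^2 - 1*s1^2*k3 - 1*s1^2*e3^2 + c2^2*be + c2^2*s2^2 + c2^2*s1^2 + c1^2*be + c1^2*s2^2 + c1^2*s1^2) * hbe + (-1*s2^4 - 2*s1^2*s2^2 - 1*s1^4) * hk3
    have T3 : (k3*b1-k2*c1)^2+(k3*b2-k2*c2)^2 = e2^2*k3^2+e3^2*k2^2 := by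
      linear_combination (-1*k2*k3) * E7 + (-1*k3^2 - 1*k2*k3 - 1*e3^2*k2 + e2^2*k3 + e2^2*e3^2 + c2^2*k2 - 1*c2^2*e2^2 + c1^2*k2 - 1*c1^2*e2^2 - 1*b2^2*k3 - 1*b2^2*e3^2 + b2^2*c2^2 + b2^2*c1^2 - 1*b1^2*k3 - 1*b1^2*e3^2 + b1^2*c2^2 + b1^2*c1^2) * hk2 + (-1*e2^4 + 2*b2^2*e2^2 - 1*b2^4 + 2*b1^2*e2^2 - 2*b1^2*b2^2 - 1*b1^4) * hk3
    have t4a : G1*a1+G2*a2 = 0 := by linear_combination ((1/2)*al) * E5 + ((-1/2)*k2) * E1 + (a1) * hG1 + (a2) * hG2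
    have t4b : (k3*s1-be*c1)*d1+(k3*s2-be*c2)*d2 = 0 := by linear_combination ((1/2)*k3) * E3 + ((-1/2)*be) * E6
    have hdne : d1 ≠ 0 ∨ d2 ≠ 0 := by
      by_contra h
      push_neg at h
      have : e4^2 = 0 := by rw [← H4, h.1, h.2]; ring
      exact (ne_of_gt (by positivity : (0:ℝ) < e4^2)) this
    have hane : a1 ≠ 0 ∨ a2 ≠ 0 := by
      by_contra h
      push_neg at h
      have : e1^2 = 0 := by rw [← H1, h.1, h.2]; ring
      exact (ne_of_gt (by positivity : (0:ℝ) < e1^2)) this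
    have crYA : (k3*s1-be*c1)*a2-(k3*s2-be*c2)*a1 = 0 := by
      rcases hdne with hd | hd
      · refine mul_left_cancel₀ hd ?_
        show d1*((k3*s1-be*c1)*a2-(k3*s2-be*c2)*a1) = d1*0
        linear_combination (a2) * t4b + (-1*s2*k3 + c2*be) * E8
      · refine mul_left_cancel₀ hd ?_
        show d2*((k3*s1-be*c1)*a2-(k3*s2-be*c2)*a1) = d2*0
        linear_combination (s1*k3 - 1*c1*be) * E8 + (-1*a1) * t4b
    have t4d : G1*(k3*s1-be*c1)+G2*(k3*s2-be*c2) = 0 := by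
      rcases hane with ha | ha
      · refine mul_left_cancel₀ ha ?_
        show a1*(G1*(k3*s1-be*c1)+G2*(k3*s2-be*c2)) = a1*0
        linear_combination (s1*k3 - 1*c1*be) * t4a + (-1*G2) * crYA
      · refine mul_left_cancel₀ ha ?_
        show a2*(G1*(k3*s1-be*c1)+G2*(k3*s2-be*c2)) = a2*0
        linear_combination (s2*k3 - 1*c2*be) * t4a + (G1) * crYA
    have NVne : NV ≠ 0 := by
      intro h
      have hsum : V1^2+V2^2 = 0 := by rw [← hNV]; exact h
      obtain ⟨hV1z, hV2z⟩ := sum_sq_eq_zero hsum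
      have habe : al^2*be = be^2*al := by linear_combination (s1*al + q1*be) * hV1z + (s2*al + q2*be) * hV2z + (-1*s1*al - 1*q1*be) * hV1 + (-1*s2*al - 1*q2*be) * hV2 + (-1*be^2 + al*be - 1*s2^2*al - 1*s1^2*al + q2^2*be - 1*q2^2*s2^2 - 1*q2^2*s1^2 + q1^2*be - 1*q1^2*s2^2 - 1*q1^2*s1^2) * hal + (q2^4 + 2*q1^2*q2^2 + q1^4) * hbe
      have hab : al = be := by
        have h2 : al*(be*(al - be)) = 0 := by linear_combination habe
        rcases mul_eq_zero.mp h2 with h3 | h3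
        · exact absurd h3 alne
        · rcases mul_eq_zero.mp h3 with h4 | h4
          · exact absurd h4 bene
          · linarith [sub_eq_zero.mp h4]
      have hs1q : s1 = q1 := by
        have hz : al*(s1 - q1) = 0 := by linear_combination hV1z - hV1 - q1*hab
        have := (mul_eq_zero.mp hz).resolve_left alne
        linarith [sub_eq_zero.mp this]
      have hs2q : s2 = q2 := by
        have hz : al*(s2 - q2) = 0 := by linear_combination hV2z - hV2 - q2*hab
        have := (mul_eq_zero.mp hz).resolve_left alne
        linarith [sub_eq_zero.mp this]
      exact hqs ⟨hs1q.symm, hs2q.symm⟩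
    have hc1 : xx1^2+xx2^2 = e2^2*al^2*be^2*k3^2 := by linear_combination (be^2*k3^2) * T1 + (xx1 - 1*be*k3*G1) * hxx1 + (xx2 - 1*be*k3*G2) * hxx2
    have hc2 : yy1^2+yy2^2 = e3^2*al^2*be^2*k2^2 := by linear_combination (al^2*k2^2) * T2 + (yy1 + s1*al*k2*k3 - 1*c1*al*be*k2) * hyy1 + (yy2 + s2*al*k2*k3 - 1*c2*al*be*k2) * hyy2
    have hc3 : mm1^2+mm2^2 = e2^2*al^2*be^2*k3^2 + e3^2*al^2*be^2*k2^2 := by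
      linear_combination (al^2*be^2) * T3 + (mm1 - 1*c1*al*be*k2 + b1*al*be*k3) * hmm1 + (mm2 - 1*c2*al*be*k2 + b2*al*be*k3) * hmm2
    have hc4 : xx1*yy1+xx2*yy2 = 0 := by linear_combination (-1*al*be*k2*k3) * t4d + (yy1) * hxx1 + (yy2) * hxx2 + (-1*be*k3*G1) * hyy1 + (-1*be*k3*G2) * hyy2
    have CONC := core_chord xx1 xx2 yy1 yy2 mm1 mm2 ww1 ww2 NN TT
      (e2^2*al^2*be^2*k3^2) (e3^2*al^2*be^2*k2^2) hww1 hww2 hNN hTT hc1 hc2 hc3 hc4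
    have CONCp : F1^2+F2^2 = NN^2*(e3^2*al^2*be^2*k2^2) := by linear_combination (1) * CONC + (F1 + ww1*TT + mm1*NN + xx1*NN) * hF1 + (F2 + ww2*TT + mm2*NN + xx2*NN) * hF2
    have lin3 : F1 = be*k2^2*k3^2*(k3*U1-al*k2*NV*c1) := by linear_combination (1) * hF1 + (ww1) * hTT + (mm1 + xx1) * hNN + (mm1*ww1 - 1*mm1^2 + yy1*mm1 - 2*xx2*ww2 - 1*xx1*ww1 - 1*xx1*yy1 + xx1^2) * hww1 + (mm1*ww2 - 1*mm1*mm2 + yy2*mm1 + xx2*mm1 - 2*xx2*yy1 + xx1*ww2 - 1*xx1*mm2 + xx1*yy2 + xx1*xx2) * hww2 + (-1*be*k2^2*k3^3) * hU1 + (-2*be*k2^2*k3^3*V1) * hGV + (mm2^2 + mm1^2 - 2*yy2*mm2 + yy2^2 - 1*yy1^2 - 1*xx2^2 - 1*xx1*mm1 + 2*xx1*yy1 - 1*xx1^2 + be*k3*G1*mm1 - 2*be*k3*G1*yy1 + be*k3*G1*xx1 - 1*be^2*k3^2*G1^2) * hxx1 + (2*yy1*mm2 - 2*yy1*yy2 -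 1*xx2*mm1 + 2*xx2*yy1 + be*k3*G2*mm1 - 2*be*k3*G2*yy1 + be*k3*G1*xx2 - 1*be^2*k3^2*G1*G2) * hxx2 + (-2*mm1^2 + yy1*mm1 - 2*be*k3*G2*mm2 + 2*be*k3*G2*yy2 + be*k3*G1*yy1 + 2*be^2*k3^2*G2^2 + 2*be^2*k3^2*G1^2 + s1*al*k2*k3*mm1 + s1*al*be*k2*k3^2*G1 - 1*c1*al*be*k2*mm1 - 1*c1*al*be^2*k2*k3*G1) * hyy1 + (-2*mm1*mm2 + yy2*mm1 + 2*be*k3*G1*mm2 - 1*be*k3*G1*yy2 + s2*al*k2*k3*mm1 - 1*s2*al*be*k2*k3^2*G1 + 2*s1*al*be*k2*k3^2*G2 - 1*c2*al*be*k2*mm1 + c2*al*be^2*k2*k3*G1 - 2*c1*al*be^2*k2*k3*G2) * hyy2 + (mm2^2 + mm1^2 - 1*be*k3*G1*mm1 - 1*be^2*k3^2*G2^2 - 1*be^2*k3^2*G1^2 - 2*s2*al*k2*k3*mm2 + s2^2*al^2*k2^2*k3^2 - 2*s1*al*k2*k3*mm1 + s1^2*al^2*k2^2*k3^2 + 2*c2*al*be*k2*mm2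 - 2*c2*s2*al^2*be*k2^2*k3 + c2^2*al^2*be^2*k2^2 + c1*al*be*k2*mm1 + c1*al*be^2*k2*k3*G1 + b1*al*be*k3*mm1 - 1*b1*al*be^2*k3^2*G1 - 2*b1*s1*al^2*be*k2*k3^2 + b1^2*al^2*be^2*k3^2) * hmm1 + (-1*be*k3*G1*mm2 + 2*s2*al*be*k2*k3^2*G1 - 2*s1*al*be*k2*k3^2*G2 - 1*c2*al*be^2*k2*k3*G1 - 1*c1*al*be*k2*mm2 + 2*c1*al*be^2*k2*k3*G2 + 2*c1*s2*al^2*be*k2^2*k3 - 1*c1*c2*al^2*be^2*k2^2 - 1*b2*al*be^2*k3^2*G1 - 1*b2*c1*al^2*be^2*k2*k3 + b1*al*be*k3*mm2 - 2*b1*s2*al^2*be*k2*k3^2 + b1*c2*al^2*be^2*k2*k3 + b1*b2*al^2*be^2*k3^2) * hmm2 + (-2*be*k2^2*k3^3*V1^2 + be^3*k3^3*G2^2 + be^3*k3^3*G1^2 - 1*s2^2*al^2*be*k2^2*k3^3 + 2*s1*al*be^2*k2*k3^3*G1 + s1^2*al^2*be*k2^2*k3^3 - 1*q1*be^3*k2*k3^3*G1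 - 2*q1*s1*al*be^2*k2^2*k3^3 + q1^2*be^3*k2^2*k3^3 - 1*c1*al*be^3*k2*k3^2*G1 - 2*c1*s1*al^2*be^2*k2^2*k3^2 + c1*q1*al*be^3*k2^2*k3^2 + 2*b2*s2*al^2*be^2*k2*k3^3 - 1*b2^2*al^2*be^3*k3^3 + 2*b1*s1*al^2*be^2*k2*k3^3 - 1*b1*q1*al*be^3*k2*k3^3 + b1*c1*al^2*be^3*k2*k3^2 - 1*b1^2*al^2*be^3*k3^3) * hG1 + (-2*be*k2^2*k3^3*V1*V2 + 2*s1*al*be^2*k2*k3^3*G2 + 2*s1*s2*al^2*be*k2^2*k3^3 - 2*q2*s1*al*be^2*k2^2*k3^3 - 1*q1*be^3*k2*k3^3*G2 + q1*q2*be^3*k2^2*k3^3 - 1*c1*al*be^3*k2*k3^2*G2 - 2*c1*s2*al^2*be^2*k2^2*k3^2 + c1*q2*al*be^3*k2^2*k3^2 - 1*b2*q1*al*be^3*k2*k3^3 + b2*c1*al^2*be^3*k2*k3^2) * hG2 + (-1*q1*be*k2^3*k3^3 + c1*al*be*k2^3*k3^2) * hNV + (2*q2*be*k2^3*k3^3*V2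 + q1*be*k2^3*k3^3*V1 + q1*s1*al*be*k2^3*k3^3 - 1*q1^2*be^2*k2^3*k3^3 + c1*al*be*k2^3*k3^2*V1 + c1*s1*al^2*be*k2^3*k3^2 - 1*c1*q1*al*be^2*k2^3*k3^2 - 2*b2*al*be*k2^2*k3^3*V2 - 2*b1*al*be*k2^2*k3^3*V1 - 2*b1*s1*al^2*be*k2^2*k3^3 + 2*b1*q1*al*be^2*k2^2*k3^3) * hV1 + (2*q2*s1*al*be*k2^3*k3^3 - 1*q1*be*k2^3*k3^3*V2 - 1*q1*s2*al*be*k2^3*k3^3 - 1*q1*q2*be^2*k2^3*k3^3 + c1*al*be*k2^3*k3^2*V2 + c1*s2*al^2*be*k2^3*k3^2 - 1*c1*q2*al*be^2*k2^3*k3^2 - 2*b2*s1*al^2*be*k2^2*k3^3 + 2*b2*q1*al*be^2*k2^2*k3^3) * hV2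
    have lin4 : F2 = be*k2^2*k3^2*(k3*U2-al*k2*NV*c2) := by linear_combination (1) * hF2 + (ww2) * hTT + (mm2 + xx2) * hNN + (mm2*ww1 - 1*mm1*mm2 + yy1*mm2 + xx2*ww1 - 1*xx2*mm1 + xx2*yy1 - 2*xx1*ww2 - 1*xx1*mm2 - 1*xx1*xx2) * hww1 + (mm2*ww2 - 1*mm2^2 + yy2*mm2 - 1*xx2*ww2 - 1*xx2*yy2 + xx2^2 + 2*xx1*mm1 - 2*xx1*yy1 + 2*xx1^2) * hww2 + (-1*be*k2^2*k3^3) * hU2 + (-2*be*k2^2*k3^3*V2) * hGV + (2*yy2*mm1 - 2*yy1*yy2 - 1*xx1*mm2 + 2*xx1*yy2 - 1*xx1*xx2 + be*k3*G1*mm2 - 2*be*k3*G1*yy2 + be*k3*G1*xx2) * hxx1 + (mm2^2 + mm1^2 - 1*yy2^2 - 2*yy1*mm1 + yy1^2 - 1*xx2*mm2 + 2*xx2*yy2 - 1*xx2^2 + be*k3*G2*mm2 - 2*be*k3*G2*yy2 + be*k3*G2*xx2 - 1*be^2*k3^2*G2^2 - 1*be^2*k3^2*G1^2) * hxx2 +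 (-2*mm1*mm2 + yy1*mm2 + 2*be*k3*G2*mm1 - 1*be*k3*G2*yy1 + 2*be*k3*G1*yy2 + s1*al*k2*k3*mm2 - 1*s1*al*be*k2*k3^2*G2 - 1*c1*al*be*k2*mm2 + c1*al*be^2*k2*k3*G2) * hyy1 + (-2*mm2^2 + yy2*mm2 + be*k3*G2*yy2 - 2*be*k3*G1*mm1 + 2*be^2*k3^2*G2^2 + 2*be^2*k3^2*G1^2 + s2*al*k2*k3*mm2 + s2*al*be*k2*k3^2*G2 + 2*s1*al*be*k2*k3^2*G1 - 1*c2*al*be*k2*mm2 - 1*c2*al*be^2*k2*k3*G2 - 2*c1*al*be^2*k2*k3*G1) * hyy2 + (mm1*mm2 - 1*be*k3*G2*mm1 - 2*s2*al*be*k2*k3^2*G1 - 2*s1*al*k2*k3*mm2 + 2*s1*al*be*k2*k3^2*G2 + 2*c2*al*be^2*k2*k3*G1 + c1*al*be*k2*mm2 - 1*c1*al*be^2*k2*k3*G2 + b1*al*be*k3*mm2 - 1*b1*al*be^2*k3^2*G2) * hmm1 + (mm2^2 - 1*be*k3*G2*mm2 - 1*be^2*k3^2*G2^2 - 1*be^2*k3^2*G1^2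 - 2*s2*al*k2*k3*mm2 + s2^2*al^2*k2^2*k3^2 + s1^2*al^2*k2^2*k3^2 + c2*al*be*k2*mm2 + c2*al*be^2*k2*k3*G2 + b2*al*be*k3*mm2 - 1*b2*al*be^2*k3^2*G2 - 2*b2*s2*al^2*be*k2*k3^2 + b2^2*al^2*be^2*k3^2 - 2*b1*s1*al^2*be*k2*k3^2 + b1^2*al^2*be^2*k3^2) * hmm2 + (-2*be*k2^2*k3^3*V1*V2 + be^3*k3^3*G1*G2 + 2*s2*al*be^2*k2*k3^3*G1 + 2*s1*s2*al^2*be*k2^2*k3^3 - 1*q1*be^3*k2*k3^3*G2 - 2*q1*s2*al*be^2*k2^2*k3^3 - 1*c2*al*be^3*k2*k3^2*G1 - 2*c2*s1*al^2*be^2*k2^2*k3^2 + c2*q1*al*be^3*k2^2*k3^2 - 1*b2*al*be^3*k3^3*G1 + b2*q1*al*be^3*k2*k3^3 + b1*al*be^3*k3^3*G2 + b1*c2*al^2*be^3*k2*k3^2 - 1*b1*b2*al^2*be^3*k3^3) * hG1 + (-2*be*k2^2*k3^3*V2^2 + be^3*k3^3*G2^2 + 2*s2*al*be^2*k2*k3^3*G2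 + s2^2*al^2*be*k2^2*k3^3 - 1*s1^2*al^2*be*k2^2*k3^3 - 1*q2*be^3*k2*k3^3*G2 - 2*q2*s2*al*be^2*k2^2*k3^3 + q2^2*be^3*k2^2*k3^3 + q1^2*be^3*k2^2*k3^3 - 1*c2*al*be^3*k2*k3^2*G2 - 2*c2*s2*al^2*be^2*k2^2*k3^2 + c2*q2*al*be^3*k2^2*k3^2 + 2*b2*s2*al^2*be^2*k2*k3^3 - 1*b2*q2*al*be^3*k2*k3^3 + b2*c2*al^2*be^3*k2*k3^2 - 1*b2^2*al^2*be^3*k3^3 + 2*b1*s1*al^2*be^2*k2*k3^3 - 2*b1*q1*al*be^3*k2*k3^3) * hG2 + (-1*q2*be*k2^3*k3^3 + c2*al*be*k2^3*k3^2) * hNV + (-1*q2*be*k2^3*k3^3*V1 - 1*q2*s1*al*be*k2^3*k3^3 + 2*q1*be*k2^3*k3^3*V2 + q1*q2*be^2*k2^3*k3^3 + c2*al*be*k2^3*k3^2*V1 + c2*s1*al^2*be*k2^3*k3^2 - 1*c2*q1*al*be^2*k2^3*k3^2 - 2*b1*al*be*k2^2*k3^3*V2) * hV1 + (q2*be*k2^3*k3^3*V2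 + q2*s2*al*be*k2^3*k3^3 - 1*q2^2*be^2*k2^3*k3^3 + 2*q1*s1*al*be*k2^3*k3^3 - 2*q1^2*be^2*k2^3*k3^3 + c2*al*be*k2^3*k3^2*V2 + c2*s2*al^2*be*k2^3*k3^2 - 1*c2*q2*al*be^2*k2^3*k3^2 - 2*b2*al*be*k2^2*k3^3*V2 - 2*b2*s2*al^2*be*k2^2*k3^3 + 2*b2*q2*al*be^2*k2^2*k3^3 - 2*b1*s1*al^2*be*k2^2*k3^3 + 2*b1*q1*al*be^2*k2^2*k3^3) * hV2
    have linNN : NN = k2^2*k3^2*NV := by linear_combination (1) * hNN + (ww1 - 1*mm1 + yy1 - 1*xx1) * hww1 + (ww2 - 1*mm2 + yy2 - 1*xx2) * hww2 + (2*mm1 - 2*yy1 + xx1 - 1*be*k3*G1) * hxx1 + (2*mm2 - 2*yy2 + xx2 - 1*be*k3*G2) * hxx2 + (-2*mm1 + yy1 + 2*be*k3*G1 + s1*al*k2*k3 - 1*c1*al*be*k2) * hyy1 + (-2*mm2 + yy2 + 2*be*k3*G2 + s2*al*k2*k3 - 1*c2*al*be*k2) * hyy2 + (mm1 - 2*be*k3*G1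 - 2*s1*al*k2*k3 + c1*al*be*k2 + b1*al*be*k3) * hmm1 + (mm2 - 2*be*k3*G2 - 2*s2*al*k2*k3 + c2*al*be*k2 + b2*al*be*k3) * hmm2 + (be^2*k3^2*G1 + 2*s1*al*be*k2*k3^2 - 1*q1*be^2*k2*k3^2 - 1*b1*al*be^2*k3^2) * hG1 + (be^2*k3^2*G2 + 2*s2*al*be*k2*k3^2 - 1*q2*be^2*k2*k3^2 - 1*b2*al*be^2*k3^2) * hG2 + (-1*k2^2*k3^2) * hNV + (-1*k2^2*k3^2*V1 - 1*s1*al*k2^2*k3^2 + q1*be*k2^2*k3^2) * hV1 + (-1*k2^2*k3^2*V2 - 1*s2*al*k2^2*k3^2 + q2*be*k2^2*k3^2) * hV2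
    have C_P2M : (be^2*k2^4*k3^4)*((k3*U1-al*k2*NV*c1)^2+(k3*U2-al*k2*NV*c2)^2)
        = (be^2*k2^4*k3^4)*(e3^2*al^2*k2^2*NV^2) := by linear_combination (1) * CONCp + (-1*F1 - 1*be*k2^2*k3^3*U1 + c1*al*be*k2^3*k3^2*NV) * lin3 + (-1*F2 - 1*be*k2^2*k3^3*U2 + c2*al*be*k2^3*k3^2*NV) * lin4 + (-1*e3^2*al^2*be^2*k2^2*NN - 1*e3^2*al^2*be^2*k2^4*k3^2*NV) * linNN + (2*e3^2*al^2*be^2*k2^2*NN + 2*e3^2*al^2*be^2*k2^2*ww2^2 + 2*e3^2*al^2*be^2*k2^2*ww1^2) * hNN + (4*e3^2*al^2*be^2*k2^2*ww1*ww2^2 + 2*e3^2*al^2*be^2*k2^2*ww1^3 - 4*e3^2*al^2*be^2*k2^2*mm1*ww2^2 - 2*e3^2*al^2*be^2*k2^2*mm1*ww1^2 + 2*e3^2*al^2*be^2*k2^2*mm1^2*ww1 - 2*e3^2*al^2*be^2*k2^2*mm1^3 + 4*e3^2*al^2*be^2*k2^2*yy1*ww2^2 + 2*e3^2*al^2*be^2*k2^2*yy1*ww1^2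 - 4*e3^2*al^2*be^2*k2^2*yy1*mm1*ww1 + 6*e3^2*al^2*be^2*k2^2*yy1*mm1^2 + 2*e3^2*al^2*be^2*k2^2*yy1^2*ww1 - 6*e3^2*al^2*be^2*k2^2*yy1^2*mm1 + 2*e3^2*al^2*be^2*k2^2*yy1^3 - 4*e3^2*al^2*be^2*k2^2*xx1*ww2^2 - 2*e3^2*al^2*be^2*k2^2*xx1*ww1^2 + 4*e3^2*al^2*be^2*k2^2*xx1*mm1*ww1 - 6*e3^2*al^2*be^2*k2^2*xx1*mm1^2 - 4*e3^2*al^2*be^2*k2^2*xx1*yy1*ww1 + 12*e3^2*al^2*be^2*k2^2*xx1*yy1*mm1 - 6*e3^2*al^2*be^2*k2^2*xx1*yy1^2 + 2*e3^2*al^2*be^2*k2^2*xx1^2*ww1 - 6*e3^2*al^2*be^2*k2^2*xx1^2*mm1 + 6*e3^2*al^2*be^2*k2^2*xx1^2*yy1 - 2*e3^2*al^2*be^2*k2^2*xx1^3) * hww1 + (2*e3^2*al^2*be^2*k2^2*ww2^3 - 2*e3^2*al^2*be^2*k2^2*mm2*ww2^2 + 2*e3^2*al^2*be^2*k2^2*mm2^2*ww2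 - 2*e3^2*al^2*be^2*k2^2*mm2^3 + 4*e3^2*al^2*be^2*k2^2*mm1^2*ww2 - 4*e3^2*al^2*be^2*k2^2*mm1^2*mm2 + 2*e3^2*al^2*be^2*k2^2*yy2*ww2^2 - 4*e3^2*al^2*be^2*k2^2*yy2*mm2*ww2 + 6*e3^2*al^2*be^2*k2^2*yy2*mm2^2 + 4*e3^2*al^2*be^2*k2^2*yy2*mm1^2 + 2*e3^2*al^2*be^2*k2^2*yy2^2*ww2 - 6*e3^2*al^2*be^2*k2^2*yy2^2*mm2 + 2*e3^2*al^2*be^2*k2^2*yy2^3 - 8*e3^2*al^2*be^2*k2^2*yy1*mm1*ww2 + 8*e3^2*al^2*be^2*k2^2*yy1*mm1*mm2 - 8*e3^2*al^2*be^2*k2^2*yy1*yy2*mm1 + 4*e3^2*al^2*be^2*k2^2*yy1^2*ww2 - 4*e3^2*al^2*be^2*k2^2*yy1^2*mm2 + 4*e3^2*al^2*be^2*k2^2*yy1^2*yy2 - 2*e3^2*al^2*be^2*k2^2*xx2*ww2^2 + 4*e3^2*al^2*be^2*k2^2*xx2*mm2*ww2 - 6*e3^2*al^2*be^2*k2^2*xx2*mm2^2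 - 4*e3^2*al^2*be^2*k2^2*xx2*mm1^2 - 4*e3^2*al^2*be^2*k2^2*xx2*yy2*ww2 + 12*e3^2*al^2*be^2*k2^2*xx2*yy2*mm2 - 6*e3^2*al^2*be^2*k2^2*xx2*yy2^2 + 8*e3^2*al^2*be^2*k2^2*xx2*yy1*mm1 - 4*e3^2*al^2*be^2*k2^2*xx2*yy1^2 + 2*e3^2*al^2*be^2*k2^2*xx2^2*ww2 - 6*e3^2*al^2*be^2*k2^2*xx2^2*mm2 + 6*e3^2*al^2*be^2*k2^2*xx2^2*yy2 - 2*e3^2*al^2*be^2*k2^2*xx2^3 + 8*e3^2*al^2*be^2*k2^2*xx1*mm1*ww2 - 8*e3^2*al^2*be^2*k2^2*xx1*mm1*mm2 + 8*e3^2*al^2*be^2*k2^2*xx1*yy2*mm1 - 8*e3^2*al^2*be^2*k2^2*xx1*yy1*ww2 + 8*e3^2*al^2*be^2*k2^2*xx1*yy1*mm2 - 8*e3^2*al^2*be^2*k2^2*xx1*yy1*yy2 - 8*e3^2*al^2*be^2*k2^2*xx1*xx2*mm1 + 8*e3^2*al^2*be^2*k2^2*xx1*xx2*yy1 + 4*e3^2*al^2*be^2*k2^2*xx1^2*ww2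 - 4*e3^2*al^2*be^2*k2^2*xx1^2*mm2 + 4*e3^2*al^2*be^2*k2^2*xx1^2*yy2 - 4*e3^2*al^2*be^2*k2^2*xx1^2*xx2) * hww2 + (8*e3^2*al^2*be^2*k2^2*mm1*mm2^2 + 8*e3^2*al^2*be^2*k2^2*mm1^3 - 16*e3^2*al^2*be^2*k2^2*yy2*mm1*mm2 + 8*e3^2*al^2*be^2*k2^2*yy2^2*mm1 - 8*e3^2*al^2*be^2*k2^2*yy1*mm2^2 - 24*e3^2*al^2*be^2*k2^2*yy1*mm1^2 + 16*e3^2*al^2*be^2*k2^2*yy1*yy2*mm2 - 8*e3^2*al^2*be^2*k2^2*yy1*yy2^2 + 24*e3^2*al^2*be^2*k2^2*yy1^2*mm1 - 8*e3^2*al^2*be^2*k2^2*yy1^3 + 16*e3^2*al^2*be^2*k2^2*xx2*mm1*mm2 - 16*e3^2*al^2*be^2*k2^2*xx2*yy2*mm1 - 16*e3^2*al^2*be^2*k2^2*xx2*yy1*mm2 + 16*e3^2*al^2*be^2*k2^2*xx2*yy1*yy2 + 8*e3^2*al^2*be^2*k2^2*xx2^2*mm1 - 8*e3^2*al^2*be^2*k2^2*xx2^2*yy1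 + 4*e3^2*al^2*be^2*k2^2*xx1*mm2^2 + 12*e3^2*al^2*be^2*k2^2*xx1*mm1^2 - 8*e3^2*al^2*be^2*k2^2*xx1*yy2*mm2 + 4*e3^2*al^2*be^2*k2^2*xx1*yy2^2 - 24*e3^2*al^2*be^2*k2^2*xx1*yy1*mm1 + 12*e3^2*al^2*be^2*k2^2*xx1*yy1^2 + 8*e3^2*al^2*be^2*k2^2*xx1*xx2*mm2 - 8*e3^2*al^2*be^2*k2^2*xx1*xx2*yy2 + 4*e3^2*al^2*be^2*k2^2*xx1*xx2^2 + 8*e3^2*al^2*be^2*k2^2*xx1^2*mm1 - 8*e3^2*al^2*be^2*k2^2*xx1^2*yy1 + 2*e3^2*al^2*be^2*k2^2*xx1^3 - 4*e3^2*al^2*be^3*k2^2*k3*G1*mm2^2 - 12*e3^2*al^2*be^3*k2^2*k3*G1*mm1^2 + 8*e3^2*al^2*be^3*k2^2*k3*G1*yy2*mm2 - 4*e3^2*al^2*be^3*k2^2*k3*G1*yy2^2 + 24*e3^2*al^2*be^3*k2^2*k3*G1*yy1*mm1 - 12*e3^2*al^2*be^3*k2^2*k3*G1*yy1^2 - 8*e3^2*al^2*be^3*k2^2*k3*G1*xx2*mm2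 + 8*e3^2*al^2*be^3*k2^2*k3*G1*xx2*yy2 - 4*e3^2*al^2*be^3*k2^2*k3*G1*xx2^2 - 8*e3^2*al^2*be^3*k2^2*k3*G1*xx1*mm1 + 8*e3^2*al^2*be^3*k2^2*k3*G1*xx1*yy1 - 2*e3^2*al^2*be^3*k2^2*k3*G1*xx1^2 + 8*e3^2*al^2*be^4*k2^2*k3^2*G1^2*mm1 - 8*e3^2*al^2*be^4*k2^2*k3^2*G1^2*yy1 + 2*e3^2*al^2*be^4*k2^2*k3^2*G1^2*xx1 - 2*e3^2*al^2*be^5*k2^2*k3^3*G1^3) * hxx1 + (8*e3^2*al^2*be^2*k2^2*mm2^3 + 8*e3^2*al^2*be^2*k2^2*mm1^2*mm2 - 24*e3^2*al^2*be^2*k2^2*yy2*mm2^2 - 8*e3^2*al^2*be^2*k2^2*yy2*mm1^2 + 24*e3^2*al^2*be^2*k2^2*yy2^2*mm2 - 8*e3^2*al^2*be^2*k2^2*yy2^3 - 16*e3^2*al^2*be^2*k2^2*yy1*mm1*mm2 + 16*e3^2*al^2*be^2*k2^2*yy1*yy2*mm1 + 8*e3^2*al^2*be^2*k2^2*yy1^2*mm2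 - 8*e3^2*al^2*be^2*k2^2*yy1^2*yy2 + 12*e3^2*al^2*be^2*k2^2*xx2*mm2^2 + 4*e3^2*al^2*be^2*k2^2*xx2*mm1^2 - 24*e3^2*al^2*be^2*k2^2*xx2*yy2*mm2 + 12*e3^2*al^2*be^2*k2^2*xx2*yy2^2 - 8*e3^2*al^2*be^2*k2^2*xx2*yy1*mm1 + 4*e3^2*al^2*be^2*k2^2*xx2*yy1^2 + 8*e3^2*al^2*be^2*k2^2*xx2^2*mm2 - 8*e3^2*al^2*be^2*k2^2*xx2^2*yy2 + 2*e3^2*al^2*be^2*k2^2*xx2^3 - 12*e3^2*al^2*be^3*k2^2*k3*G2*mm2^2 - 4*e3^2*al^2*be^3*k2^2*k3*G2*mm1^2 + 24*e3^2*al^2*be^3*k2^2*k3*G2*yy2*mm2 - 12*e3^2*al^2*be^3*k2^2*k3*G2*yy2^2 + 8*e3^2*al^2*be^3*k2^2*k3*G2*yy1*mm1 - 4*e3^2*al^2*be^3*k2^2*k3*G2*yy1^2 - 8*e3^2*al^2*be^3*k2^2*k3*G2*xx2*mm2 + 8*e3^2*al^2*be^3*k2^2*k3*G2*xx2*yy2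 - 2*e3^2*al^2*be^3*k2^2*k3*G2*xx2^2 - 16*e3^2*al^2*be^3*k2^2*k3*G1*mm1*mm2 + 16*e3^2*al^2*be^3*k2^2*k3*G1*yy2*mm1 + 16*e3^2*al^2*be^3*k2^2*k3*G1*yy1*mm2 - 16*e3^2*al^2*be^3*k2^2*k3*G1*yy1*yy2 - 8*e3^2*al^2*be^3*k2^2*k3*G1*xx2*mm1 + 8*e3^2*al^2*be^3*k2^2*k3*G1*xx2*yy1 + 8*e3^2*al^2*be^4*k2^2*k3^2*G2^2*mm2 - 8*e3^2*al^2*be^4*k2^2*k3^2*G2^2*yy2 + 2*e3^2*al^2*be^4*k2^2*k3^2*G2^2*xx2 + 8*e3^2*al^2*be^4*k2^2*k3^2*G1*G2*mm1 - 8*e3^2*al^2*be^4*k2^2*k3^2*G1*G2*yy1 + 8*e3^2*al^2*be^4*k2^2*k3^2*G1^2*mm2 - 8*e3^2*al^2*be^4*k2^2*k3^2*G1^2*yy2 + 4*e3^2*al^2*be^4*k2^2*k3^2*G1^2*xx2 - 2*e3^2*al^2*be^5*k2^2*k3^3*G2^3 - 4*e3^2*al^2*be^5*k2^2*k3^3*G1^2*G2)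 * hxx2 + (-8*e3^2*al^2*be^2*k2^2*mm1*mm2^2 - 8*e3^2*al^2*be^2*k2^2*mm1^3 + 16*e3^2*al^2*be^2*k2^2*yy2*mm1*mm2 - 8*e3^2*al^2*be^2*k2^2*yy2^2*mm1 + 4*e3^2*al^2*be^2*k2^2*yy1*mm2^2 + 12*e3^2*al^2*be^2*k2^2*yy1*mm1^2 - 8*e3^2*al^2*be^2*k2^2*yy1*yy2*mm2 + 4*e3^2*al^2*be^2*k2^2*yy1*yy2^2 - 8*e3^2*al^2*be^2*k2^2*yy1^2*mm1 + 2*e3^2*al^2*be^2*k2^2*yy1^3 + 16*e3^2*al^2*be^3*k2^2*k3*G2*mm1*mm2 - 16*e3^2*al^2*be^3*k2^2*k3*G2*yy2*mm1 - 8*e3^2*al^2*be^3*k2^2*k3*G2*yy1*mm2 + 8*e3^2*al^2*be^3*k2^2*k3*G2*yy1*yy2 + 8*e3^2*al^2*be^3*k2^2*k3*G1*mm2^2 + 24*e3^2*al^2*be^3*k2^2*k3*G1*mm1^2 - 16*e3^2*al^2*be^3*k2^2*k3*G1*yy2*mm2 + 8*e3^2*al^2*be^3*k2^2*k3*G1*yy2^2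 - 24*e3^2*al^2*be^3*k2^2*k3*G1*yy1*mm1 + 8*e3^2*al^2*be^3*k2^2*k3*G1*yy1^2 - 8*e3^2*al^2*be^4*k2^2*k3^2*G2^2*mm1 + 4*e3^2*al^2*be^4*k2^2*k3^2*G2^2*yy1 - 16*e3^2*al^2*be^4*k2^2*k3^2*G1*G2*mm2 + 16*e3^2*al^2*be^4*k2^2*k3^2*G1*G2*yy2 - 24*e3^2*al^2*be^4*k2^2*k3^2*G1^2*mm1 + 12*e3^2*al^2*be^4*k2^2*k3^2*G1^2*yy1 + 8*e3^2*al^2*be^5*k2^2*k3^3*G1*G2^2 + 8*e3^2*al^2*be^5*k2^2*k3^3*G1^3 + 4*s1*e3^2*al^3*be^2*k2^3*k3*mm2^2 + 12*s1*e3^2*al^3*be^2*k2^3*k3*mm1^2 - 8*s1*e3^2*al^3*be^2*k2^3*k3*yy2*mm2 + 4*s1*e3^2*al^3*be^2*k2^3*k3*yy2^2 - 8*s1*e3^2*al^3*be^2*k2^3*k3*yy1*mm1 + 2*s1*e3^2*al^3*be^2*k2^3*k3*yy1^2 - 8*s1*e3^2*al^3*be^3*k2^3*k3^2*G2*mm2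 + 8*s1*e3^2*al^3*be^3*k2^3*k3^2*G2*yy2 - 24*s1*e3^2*al^3*be^3*k2^3*k3^2*G1*mm1 + 8*s1*e3^2*al^3*be^3*k2^3*k3^2*G1*yy1 + 4*s1*e3^2*al^3*be^4*k2^3*k3^3*G2^2 + 12*s1*e3^2*al^3*be^4*k2^3*k3^3*G1^2 - 8*s1^2*e3^2*al^4*be^2*k2^4*k3^2*mm1 + 2*s1^2*e3^2*al^4*be^2*k2^4*k3^2*yy1 + 8*s1^2*e3^2*al^4*be^3*k2^4*k3^3*G1 + 2*s1^3*e3^2*al^5*be^2*k2^5*k3^3 - 4*c1*e3^2*al^3*be^3*k2^3*mm2^2 - 12*c1*e3^2*al^3*be^3*k2^3*mm1^2 + 8*c1*e3^2*al^3*be^3*k2^3*yy2*mm2 - 4*c1*e3^2*al^3*be^3*k2^3*yy2^2 + 8*c1*e3^2*al^3*be^3*k2^3*yy1*mm1 - 2*c1*e3^2*al^3*be^3*k2^3*yy1^2 + 8*c1*e3^2*al^3*be^4*k2^3*k3*G2*mm2 - 8*c1*e3^2*al^3*be^4*k2^3*k3*G2*yy2 + 24*c1*e3^2*al^3*be^4*k2^3*k3*G1*mm1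 - 8*c1*e3^2*al^3*be^4*k2^3*k3*G1*yy1 - 4*c1*e3^2*al^3*be^5*k2^3*k3^2*G2^2 - 12*c1*e3^2*al^3*be^5*k2^3*k3^2*G1^2 + 16*c1*s1*e3^2*al^4*be^3*k2^4*k3*mm1 - 4*c1*s1*e3^2*al^4*be^3*k2^4*k3*yy1 - 16*c1*s1*e3^2*al^4*be^4*k2^4*k3^2*G1 - 6*c1*s1^2*e3^2*al^5*be^3*k2^5*k3^2 - 8*c1^2*e3^2*al^4*be^4*k2^4*mm1 + 2*c1^2*e3^2*al^4*be^4*k2^4*yy1 + 8*c1^2*e3^2*al^4*be^5*k2^4*k3*G1 + 6*c1^2*s1*e3^2*al^5*be^4*k2^5*k3 - 2*c1^3*e3^2*al^5*be^5*k2^5) * hyy1 + (-8*e3^2*al^2*be^2*k2^2*mm2^3 - 8*e3^2*al^2*be^2*k2^2*mm1^2*mm2 + 12*e3^2*al^2*be^2*k2^2*yy2*mm2^2 + 4*e3^2*al^2*be^2*k2^2*yy2*mm1^2 - 8*e3^2*al^2*be^2*k2^2*yy2^2*mm2 + 2*e3^2*al^2*be^2*k2^2*yy2^3 + 24*e3^2*al^2*be^3*k2^2*k3*G2*mm2^2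 + 8*e3^2*al^2*be^3*k2^2*k3*G2*mm1^2 - 24*e3^2*al^2*be^3*k2^2*k3*G2*yy2*mm2 + 8*e3^2*al^2*be^3*k2^2*k3*G2*yy2^2 + 16*e3^2*al^2*be^3*k2^2*k3*G1*mm1*mm2 - 8*e3^2*al^2*be^3*k2^2*k3*G1*yy2*mm1 - 24*e3^2*al^2*be^4*k2^2*k3^2*G2^2*mm2 + 12*e3^2*al^2*be^4*k2^2*k3^2*G2^2*yy2 - 16*e3^2*al^2*be^4*k2^2*k3^2*G1*G2*mm1 - 8*e3^2*al^2*be^4*k2^2*k3^2*G1^2*mm2 + 4*e3^2*al^2*be^4*k2^2*k3^2*G1^2*yy2 + 8*e3^2*al^2*be^5*k2^2*k3^3*G2^3 + 8*e3^2*al^2*be^5*k2^2*k3^3*G1^2*G2 + 12*s2*e3^2*al^3*be^2*k2^3*k3*mm2^2 + 4*s2*e3^2*al^3*be^2*k2^3*k3*mm1^2 - 8*s2*e3^2*al^3*be^2*k2^3*k3*yy2*mm2 + 2*s2*e3^2*al^3*be^2*k2^3*k3*yy2^2 - 24*s2*e3^2*al^3*be^3*k2^3*k3^2*G2*mm2 +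 8*s2*e3^2*al^3*be^3*k2^3*k3^2*G2*yy2 - 8*s2*e3^2*al^3*be^3*k2^3*k3^2*G1*mm1 + 12*s2*e3^2*al^3*be^4*k2^3*k3^3*G2^2 + 4*s2*e3^2*al^3*be^4*k2^3*k3^3*G1^2 - 8*s2^2*e3^2*al^4*be^2*k2^4*k3^2*mm2 + 2*s2^2*e3^2*al^4*be^2*k2^4*k3^2*yy2 + 8*s2^2*e3^2*al^4*be^3*k2^4*k3^3*G2 + 2*s2^3*e3^2*al^5*be^2*k2^5*k3^3 + 16*s1*e3^2*al^3*be^2*k2^3*k3*mm1*mm2 - 8*s1*e3^2*al^3*be^2*k2^3*k3*yy2*mm1 - 16*s1*e3^2*al^3*be^3*k2^3*k3^2*G2*mm1 - 16*s1*e3^2*al^3*be^3*k2^3*k3^2*G1*mm2 + 8*s1*e3^2*al^3*be^3*k2^3*k3^2*G1*yy2 + 16*s1*e3^2*al^3*be^4*k2^3*k3^3*G1*G2 - 8*s1*s2*e3^2*al^4*be^2*k2^4*k3^2*mm1 + 8*s1*s2*e3^2*al^4*be^3*k2^4*k3^3*G1 - 8*s1^2*e3^2*al^4*be^2*k2^4*k3^2*mm2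 + 4*s1^2*e3^2*al^4*be^2*k2^4*k3^2*yy2 + 8*s1^2*e3^2*al^4*be^3*k2^4*k3^3*G2 + 4*s1^2*s2*e3^2*al^5*be^2*k2^5*k3^3 - 12*c2*e3^2*al^3*be^3*k2^3*mm2^2 - 4*c2*e3^2*al^3*be^3*k2^3*mm1^2 + 8*c2*e3^2*al^3*be^3*k2^3*yy2*mm2 - 2*c2*e3^2*al^3*be^3*k2^3*yy2^2 + 24*c2*e3^2*al^3*be^4*k2^3*k3*G2*mm2 - 8*c2*e3^2*al^3*be^4*k2^3*k3*G2*yy2 + 8*c2*e3^2*al^3*be^4*k2^3*k3*G1*mm1 - 12*c2*e3^2*al^3*be^5*k2^3*k3^2*G2^2 - 4*c2*e3^2*al^3*be^5*k2^3*k3^2*G1^2 + 16*c2*s2*e3^2*al^4*be^3*k2^4*k3*mm2 - 4*c2*s2*e3^2*al^4*be^3*k2^4*k3*yy2 - 16*c2*s2*e3^2*al^4*be^4*k2^4*k3^2*G2 - 6*c2*s2^2*e3^2*al^5*be^3*k2^5*k3^2 + 8*c2*s1*e3^2*al^4*be^3*k2^4*k3*mm1 - 8*c2*s1*e3^2*al^4*be^4*k2^4*k3^2*G1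 - 4*c2*s1^2*e3^2*al^5*be^3*k2^5*k3^2 - 8*c2^2*e3^2*al^4*be^4*k2^4*mm2 + 2*c2^2*e3^2*al^4*be^4*k2^4*yy2 + 8*c2^2*e3^2*al^4*be^5*k2^4*k3*G2 + 6*c2^2*s2*e3^2*al^5*be^4*k2^5*k3 - 2*c2^3*e3^2*al^5*be^5*k2^5 - 16*c1*e3^2*al^3*be^3*k2^3*mm1*mm2 + 8*c1*e3^2*al^3*be^3*k2^3*yy2*mm1 + 16*c1*e3^2*al^3*be^4*k2^3*k3*G2*mm1 + 16*c1*e3^2*al^3*be^4*k2^3*k3*G1*mm2 - 8*c1*e3^2*al^3*be^4*k2^3*k3*G1*yy2 - 16*c1*e3^2*al^3*be^5*k2^3*k3^2*G1*G2 + 8*c1*s2*e3^2*al^4*be^3*k2^4*k3*mm1 - 8*c1*s2*e3^2*al^4*be^4*k2^4*k3^2*G1 + 16*c1*s1*e3^2*al^4*be^3*k2^4*k3*mm2 - 8*c1*s1*e3^2*al^4*be^3*k2^4*k3*yy2 - 16*c1*s1*e3^2*al^4*be^4*k2^4*k3^2*G2 - 8*c1*s1*s2*e3^2*al^5*be^3*k2^5*k3^2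 - 8*c1*c2*e3^2*al^4*be^4*k2^4*mm1 + 8*c1*c2*e3^2*al^4*be^5*k2^4*k3*G1 + 8*c1*c2*s1*e3^2*al^5*be^4*k2^5*k3 - 8*c1^2*e3^2*al^4*be^4*k2^4*mm2 + 4*c1^2*e3^2*al^4*be^4*k2^4*yy2 + 8*c1^2*e3^2*al^4*be^5*k2^4*k3*G2 + 4*c1^2*s2*e3^2*al^5*be^4*k2^5*k3 - 4*c1^2*c2*e3^2*al^5*be^5*k2^5) * hyy2 + (4*e3^2*al^2*be^2*k2^2*mm1*mm2^2 + 2*e3^2*al^2*be^2*k2^2*mm1^3 - 8*e3^2*al^2*be^3*k2^2*k3*G2*mm1*mm2 - 8*e3^2*al^2*be^3*k2^2*k3*G1*mm2^2 - 8*e3^2*al^2*be^3*k2^2*k3*G1*mm1^2 + 4*e3^2*al^2*be^4*k2^2*k3^2*G2^2*mm1 + 16*e3^2*al^2*be^4*k2^2*k3^2*G1*G2*mm2 + 12*e3^2*al^2*be^4*k2^2*k3^2*G1^2*mm1 - 8*e3^2*al^2*be^5*k2^2*k3^3*G1*G2^2 - 8*e3^2*al^2*be^5*k2^2*k3^3*G1^3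 - 8*s2*e3^2*al^3*be^2*k2^3*k3*mm1*mm2 + 8*s2*e3^2*al^3*be^3*k2^3*k3^2*G2*mm1 + 16*s2*e3^2*al^3*be^3*k2^3*k3^2*G1*mm2 - 16*s2*e3^2*al^3*be^4*k2^3*k3^3*G1*G2 + 4*s2^2*e3^2*al^4*be^2*k2^4*k3^2*mm1 - 8*s2^2*e3^2*al^4*be^3*k2^4*k3^3*G1 - 8*s1*e3^2*al^3*be^2*k2^3*k3*mm2^2 - 8*s1*e3^2*al^3*be^2*k2^3*k3*mm1^2 + 16*s1*e3^2*al^3*be^3*k2^3*k3^2*G2*mm2 + 24*s1*e3^2*al^3*be^3*k2^3*k3^2*G1*mm1 - 8*s1*e3^2*al^3*be^4*k2^3*k3^3*G2^2 - 24*s1*e3^2*al^3*be^4*k2^3*k3^3*G1^2 + 16*s1*s2*e3^2*al^4*be^2*k2^4*k3^2*mm2 - 16*s1*s2*e3^2*al^4*be^3*k2^4*k3^3*G2 - 8*s1*s2^2*e3^2*al^5*be^2*k2^5*k3^3 + 12*s1^2*e3^2*al^4*be^2*k2^4*k3^2*mm1 - 24*s1^2*e3^2*al^4*be^3*k2^4*k3^3*G1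 - 8*s1^3*e3^2*al^5*be^2*k2^5*k3^3 + 8*c2*e3^2*al^3*be^3*k2^3*mm1*mm2 - 8*c2*e3^2*al^3*be^4*k2^3*k3*G2*mm1 - 16*c2*e3^2*al^3*be^4*k2^3*k3*G1*mm2 + 16*c2*e3^2*al^3*be^5*k2^3*k3^2*G1*G2 - 8*c2*s2*e3^2*al^4*be^3*k2^4*k3*mm1 + 16*c2*s2*e3^2*al^4*be^4*k2^4*k3^2*G1 - 16*c2*s1*e3^2*al^4*be^3*k2^4*k3*mm2 + 16*c2*s1*e3^2*al^4*be^4*k2^4*k3^2*G2 + 16*c2*s1*s2*e3^2*al^5*be^3*k2^5*k3^2 + 4*c2^2*e3^2*al^4*be^4*k2^4*mm1 - 8*c2^2*e3^2*al^4*be^5*k2^4*k3*G1 - 8*c2^2*s1*e3^2*al^5*be^4*k2^5*k3 + 4*c1*e3^2*al^3*be^3*k2^3*mm2^2 + 6*c1*e3^2*al^3*be^3*k2^3*mm1^2 - 8*c1*e3^2*al^3*be^4*k2^3*k3*G2*mm2 - 16*c1*e3^2*al^3*be^4*k2^3*k3*G1*mm1 + 4*c1*e3^2*al^3*be^5*k2^3*k3^2*G2^2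 + 12*c1*e3^2*al^3*be^5*k2^3*k3^2*G1^2 - 8*c1*s2*e3^2*al^4*be^3*k2^4*k3*mm2 + 8*c1*s2*e3^2*al^4*be^4*k2^4*k3^2*G2 + 4*c1*s2^2*e3^2*al^5*be^3*k2^5*k3^2 - 16*c1*s1*e3^2*al^4*be^3*k2^4*k3*mm1 + 24*c1*s1*e3^2*al^4*be^4*k2^4*k3^2*G1 + 12*c1*s1^2*e3^2*al^5*be^3*k2^5*k3^2 + 8*c1*c2*e3^2*al^4*be^4*k2^4*mm2 - 8*c1*c2*e3^2*al^4*be^5*k2^4*k3*G2 - 8*c1*c2*s2*e3^2*al^5*be^4*k2^5*k3 + 4*c1*c2^2*e3^2*al^5*be^5*k2^5 + 6*c1^2*e3^2*al^4*be^4*k2^4*mm1 - 8*c1^2*e3^2*al^4*be^5*k2^4*k3*G1 - 8*c1^2*s1*e3^2*al^5*be^4*k2^5*k3 + 2*c1^3*e3^2*al^5*be^5*k2^5 + 4*b1*e3^2*al^3*be^3*k2^2*k3*mm2^2 + 2*b1*e3^2*al^3*be^3*k2^2*k3*mm1^2 - 8*b1*e3^2*al^3*be^4*k2^2*k3^2*G2*mm2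 - 8*b1*e3^2*al^3*be^4*k2^2*k3^2*G1*mm1 + 4*b1*e3^2*al^3*be^5*k2^2*k3^3*G2^2 + 12*b1*e3^2*al^3*be^5*k2^2*k3^3*G1^2 - 8*b1*s2*e3^2*al^4*be^3*k2^3*k3^2*mm2 + 8*b1*s2*e3^2*al^4*be^4*k2^3*k3^3*G2 + 4*b1*s2^2*e3^2*al^5*be^3*k2^4*k3^3 - 8*b1*s1*e3^2*al^4*be^3*k2^3*k3^2*mm1 + 24*b1*s1*e3^2*al^4*be^4*k2^3*k3^3*G1 + 12*b1*s1^2*e3^2*al^5*be^3*k2^4*k3^3 + 8*b1*c2*e3^2*al^4*be^4*k2^3*k3*mm2 - 8*b1*c2*e3^2*al^4*be^5*k2^3*k3^2*G2 - 8*b1*c2*s2*e3^2*al^5*be^4*k2^4*k3^2 + 4*b1*c2^2*e3^2*al^5*be^5*k2^4*k3 + 4*b1*c1*e3^2*al^4*be^4*k2^3*k3*mm1 - 8*b1*c1*e3^2*al^4*be^5*k2^3*k3^2*G1 - 8*b1*c1*s1*e3^2*al^5*be^4*k2^4*k3^2 + 2*b1*c1^2*e3^2*al^5*be^5*k2^4*k3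 + 2*b1^2*e3^2*al^4*be^4*k2^2*k3^2*mm1 - 8*b1^2*e3^2*al^4*be^5*k2^2*k3^3*G1 - 8*b1^2*s1*e3^2*al^5*be^4*k2^3*k3^3 + 2*b1^2*c1*e3^2*al^5*be^5*k2^3*k3^2 + 2*b1^3*e3^2*al^5*be^5*k2^2*k3^3) * hmm1 + (2*e3^2*al^2*be^2*k2^2*mm2^3 - 8*e3^2*al^2*be^3*k2^2*k3*G2*mm2^2 + 12*e3^2*al^2*be^4*k2^2*k3^2*G2^2*mm2 + 4*e3^2*al^2*be^4*k2^2*k3^2*G1^2*mm2 - 8*e3^2*al^2*be^5*k2^2*k3^3*G2^3 - 8*e3^2*al^2*be^5*k2^2*k3^3*G1^2*G2 - 8*s2*e3^2*al^3*be^2*k2^3*k3*mm2^2 + 24*s2*e3^2*al^3*be^3*k2^3*k3^2*G2*mm2 - 24*s2*e3^2*al^3*be^4*k2^3*k3^3*G2^2 - 8*s2*e3^2*al^3*be^4*k2^3*k3^3*G1^2 + 12*s2^2*e3^2*al^4*be^2*k2^4*k3^2*mm2 - 24*s2^2*e3^2*al^4*be^3*k2^4*k3^3*G2 - 8*s2^3*e3^2*al^5*be^2*k2^5*k3^3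 + 8*s1*e3^2*al^3*be^3*k2^3*k3^2*G1*mm2 - 16*s1*e3^2*al^3*be^4*k2^3*k3^3*G1*G2 - 16*s1*s2*e3^2*al^4*be^3*k2^4*k3^3*G1 + 4*s1^2*e3^2*al^4*be^2*k2^4*k3^2*mm2 - 8*s1^2*e3^2*al^4*be^3*k2^4*k3^3*G2 - 8*s1^2*s2*e3^2*al^5*be^2*k2^5*k3^3 + 6*c2*e3^2*al^3*be^3*k2^3*mm2^2 - 16*c2*e3^2*al^3*be^4*k2^3*k3*G2*mm2 + 12*c2*e3^2*al^3*be^5*k2^3*k3^2*G2^2 + 4*c2*e3^2*al^3*be^5*k2^3*k3^2*G1^2 - 16*c2*s2*e3^2*al^4*be^3*k2^4*k3*mm2 + 24*c2*s2*e3^2*al^4*be^4*k2^4*k3^2*G2 + 12*c2*s2^2*e3^2*al^5*be^3*k2^5*k3^2 + 8*c2*s1*e3^2*al^4*be^4*k2^4*k3^2*G1 + 4*c2*s1^2*e3^2*al^5*be^3*k2^5*k3^2 + 6*c2^2*e3^2*al^4*be^4*k2^4*mm2 - 8*c2^2*e3^2*al^4*be^5*k2^4*k3*G2 - 8*c2^2*s2*e3^2*al^5*be^4*k2^5*k3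 + 2*c2^3*e3^2*al^5*be^5*k2^5 + 2*b2*e3^2*al^3*be^3*k2^2*k3*mm2^2 - 8*b2*e3^2*al^3*be^4*k2^2*k3^2*G2*mm2 + 12*b2*e3^2*al^3*be^5*k2^2*k3^3*G2^2 + 4*b2*e3^2*al^3*be^5*k2^2*k3^3*G1^2 - 8*b2*s2*e3^2*al^4*be^3*k2^3*k3^2*mm2 + 24*b2*s2*e3^2*al^4*be^4*k2^3*k3^3*G2 + 12*b2*s2^2*e3^2*al^5*be^3*k2^4*k3^3 + 8*b2*s1*e3^2*al^4*be^4*k2^3*k3^3*G1 + 4*b2*s1^2*e3^2*al^5*be^3*k2^4*k3^3 + 4*b2*c2*e3^2*al^4*be^4*k2^3*k3*mm2 - 8*b2*c2*e3^2*al^4*be^5*k2^3*k3^2*G2 - 8*b2*c2*s2*e3^2*al^5*be^4*k2^4*k3^2 + 2*b2*c2^2*e3^2*al^5*be^5*k2^4*k3 + 2*b2^2*e3^2*al^4*be^4*k2^2*k3^2*mm2 - 8*b2^2*e3^2*al^4*be^5*k2^2*k3^3*G2 - 8*b2^2*s2*e3^2*al^5*be^4*k2^3*k3^3 + 2*b2^2*c2*e3^2*al^5*be^5*k2^3*k3^2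 + 2*b2^3*e3^2*al^5*be^5*k2^2*k3^3 - 8*b1*e3^2*al^3*be^4*k2^2*k3^2*G1*mm2 + 16*b1*e3^2*al^3*be^5*k2^2*k3^3*G1*G2 + 16*b1*s2*e3^2*al^4*be^4*k2^3*k3^3*G1 - 8*b1*s1*e3^2*al^4*be^3*k2^3*k3^2*mm2 + 16*b1*s1*e3^2*al^4*be^4*k2^3*k3^3*G2 + 16*b1*s1*s2*e3^2*al^5*be^3*k2^4*k3^3 - 8*b1*c2*e3^2*al^4*be^5*k2^3*k3^2*G1 - 8*b1*c2*s1*e3^2*al^5*be^4*k2^4*k3^2 - 8*b1*b2*e3^2*al^4*be^5*k2^2*k3^3*G1 - 8*b1*b2*s1*e3^2*al^5*be^4*k2^3*k3^3 + 4*b1^2*e3^2*al^4*be^4*k2^2*k3^2*mm2 - 8*b1^2*e3^2*al^4*be^5*k2^2*k3^3*G2 - 8*b1^2*s2*e3^2*al^5*be^4*k2^3*k3^3 + 4*b1^2*c2*e3^2*al^5*be^5*k2^3*k3^2 + 4*b1^2*b2*e3^2*al^5*be^5*k2^2*k3^3) * hmm2 + (4*e3^2*al^2*be^6*k2^2*k3^4*G1*G2^2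 + 2*e3^2*al^2*be^6*k2^2*k3^4*G1^3 + 8*s2*e3^2*al^3*be^5*k2^3*k3^4*G1*G2 + 4*s2^2*e3^2*al^4*be^4*k2^4*k3^4*G1 + 8*s1*e3^2*al^3*be^5*k2^3*k3^4*G2^2 + 8*s1*e3^2*al^3*be^5*k2^3*k3^4*G1^2 + 16*s1*s2*e3^2*al^4*be^4*k2^4*k3^4*G2 + 8*s1*s2^2*e3^2*al^5*be^3*k2^5*k3^4 + 12*s1^2*e3^2*al^4*be^4*k2^4*k3^4*G1 + 8*s1^3*e3^2*al^5*be^3*k2^5*k3^4 - 4*q1*e3^2*al^2*be^6*k2^3*k3^4*G2^2 - 2*q1*e3^2*al^2*be^6*k2^3*k3^4*G1^2 - 8*q1*s2*e3^2*al^3*be^5*k2^4*k3^4*G2 - 4*q1*s2^2*e3^2*al^4*be^4*k2^5*k3^4 - 8*q1*s1*e3^2*al^3*be^5*k2^4*k3^4*G1 - 12*q1*s1^2*e3^2*al^4*be^4*k2^5*k3^4 + 2*q1^2*e3^2*al^2*be^6*k2^4*k3^4*G1 + 8*q1^2*s1*e3^2*al^3*be^5*k2^5*k3^4 - 2*q1^3*e3^2*al^2*be^6*k2^5*k3^4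 - 8*b2*e3^2*al^3*be^6*k2^2*k3^4*G1*G2 - 8*b2*s2*e3^2*al^4*be^5*k2^3*k3^4*G1 - 16*b2*s1*e3^2*al^4*be^5*k2^3*k3^4*G2 - 16*b2*s1*s2*e3^2*al^5*be^4*k2^4*k3^4 + 8*b2*q1*e3^2*al^3*be^6*k2^3*k3^4*G2 + 8*b2*q1*s2*e3^2*al^4*be^5*k2^4*k3^4 + 4*b2^2*e3^2*al^4*be^6*k2^2*k3^4*G1 + 8*b2^2*s1*e3^2*al^5*be^5*k2^3*k3^4 - 4*b2^2*q1*e3^2*al^4*be^6*k2^3*k3^4 - 4*b1*e3^2*al^3*be^6*k2^2*k3^4*G2^2 - 6*b1*e3^2*al^3*be^6*k2^2*k3^4*G1^2 - 8*b1*s2*e3^2*al^4*be^5*k2^3*k3^4*G2 - 4*b1*s2^2*e3^2*al^5*be^4*k2^4*k3^4 - 16*b1*s1*e3^2*al^4*be^5*k2^3*k3^4*G1 - 12*b1*s1^2*e3^2*al^5*be^4*k2^4*k3^4 + 4*b1*q1*e3^2*al^3*be^6*k2^3*k3^4*G1 + 8*b1*q1*s1*e3^2*al^4*be^5*k2^4*k3^4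 - 2*b1*q1^2*e3^2*al^3*be^6*k2^4*k3^4 + 8*b1*b2*e3^2*al^4*be^6*k2^2*k3^4*G2 + 8*b1*b2*s2*e3^2*al^5*be^5*k2^3*k3^4 - 4*b1*b2^2*e3^2*al^5*be^6*k2^2*k3^4 + 6*b1^2*e3^2*al^4*be^6*k2^2*k3^4*G1 + 8*b1^2*s1*e3^2*al^5*be^5*k2^3*k3^4 - 2*b1^2*q1*e3^2*al^4*be^6*k2^3*k3^4 - 2*b1^3*e3^2*al^5*be^6*k2^2*k3^4) * hG1 + (2*e3^2*al^2*be^6*k2^2*k3^4*G2^3 + 8*s2*e3^2*al^3*be^5*k2^3*k3^4*G2^2 + 12*s2^2*e3^2*al^4*be^4*k2^4*k3^4*G2 + 8*s2^3*e3^2*al^5*be^3*k2^5*k3^4 + 4*s1^2*e3^2*al^4*be^4*k2^4*k3^4*G2 + 8*s1^2*s2*e3^2*al^5*be^3*k2^5*k3^4 - 2*q2*e3^2*al^2*be^6*k2^3*k3^4*G2^2 - 8*q2*s2*e3^2*al^3*be^5*k2^4*k3^4*G2 - 12*q2*s2^2*e3^2*al^4*be^4*k2^5*k3^4 - 4*q2*s1^2*e3^2*al^4*be^4*k2^5*k3^4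 + 2*q2^2*e3^2*al^2*be^6*k2^4*k3^4*G2 + 8*q2^2*s2*e3^2*al^3*be^5*k2^5*k3^4 - 2*q2^3*e3^2*al^2*be^6*k2^5*k3^4 - 8*q1*s1*e3^2*al^3*be^5*k2^4*k3^4*G2 - 16*q1*s1*s2*e3^2*al^4*be^4*k2^5*k3^4 + 8*q1*q2*s1*e3^2*al^3*be^5*k2^5*k3^4 + 4*q1^2*e3^2*al^2*be^6*k2^4*k3^4*G2 + 8*q1^2*s2*e3^2*al^3*be^5*k2^5*k3^4 - 4*q1^2*q2*e3^2*al^2*be^6*k2^5*k3^4 - 6*b2*e3^2*al^3*be^6*k2^2*k3^4*G2^2 - 16*b2*s2*e3^2*al^4*be^5*k2^3*k3^4*G2 - 12*b2*s2^2*e3^2*al^5*be^4*k2^4*k3^4 - 4*b2*s1^2*e3^2*al^5*be^4*k2^4*k3^4 + 4*b2*q2*e3^2*al^3*be^6*k2^3*k3^4*G2 + 8*b2*q2*s2*e3^2*al^4*be^5*k2^4*k3^4 - 2*b2*q2^2*e3^2*al^3*be^6*k2^4*k3^4 + 8*b2*q1*s1*e3^2*al^4*be^5*k2^4*k3^4 -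 4*b2*q1^2*e3^2*al^3*be^6*k2^4*k3^4 + 6*b2^2*e3^2*al^4*be^6*k2^2*k3^4*G2 + 8*b2^2*s2*e3^2*al^5*be^5*k2^3*k3^4 - 2*b2^2*q2*e3^2*al^4*be^6*k2^3*k3^4 - 2*b2^3*e3^2*al^5*be^6*k2^2*k3^4) * hG2 + (-2*e3^2*al^2*be^2*k2^6*k3^4*NV - 2*e3^2*al^2*be^2*k2^6*k3^4*V2^2 - 2*e3^2*al^2*be^2*k2^6*k3^4*V1^2) * hNV + (-4*e3^2*al^2*be^2*k2^6*k3^4*V1*V2^2 - 2*e3^2*al^2*be^2*k2^6*k3^4*V1^3 - 4*s1*e3^2*al^3*be^2*k2^6*k3^4*V2^2 - 2*s1*e3^2*al^3*be^2*k2^6*k3^4*V1^2 - 2*s1^2*e3^2*al^4*be^2*k2^6*k3^4*V1 - 2*s1^3*e3^2*al^5*be^2*k2^6*k3^4 + 4*q1*e3^2*al^2*be^3*k2^6*k3^4*V2^2 + 2*q1*e3^2*al^2*be^3*k2^6*k3^4*V1^2 + 4*q1*s1*e3^2*al^3*be^3*k2^6*k3^4*V1 + 6*q1*s1^2*e3^2*al^4*be^3*k2^6*k3^4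 - 2*q1^2*e3^2*al^2*be^4*k2^6*k3^4*V1 - 6*q1^2*s1*e3^2*al^3*be^4*k2^6*k3^4 + 2*q1^3*e3^2*al^2*be^5*k2^6*k3^4) * hV1 + (-2*e3^2*al^2*be^2*k2^6*k3^4*V2^3 - 2*s2*e3^2*al^3*be^2*k2^6*k3^4*V2^2 - 2*s2^2*e3^2*al^4*be^2*k2^6*k3^4*V2 - 2*s2^3*e3^2*al^5*be^2*k2^6*k3^4 - 4*s1^2*e3^2*al^4*be^2*k2^6*k3^4*V2 - 4*s1^2*s2*e3^2*al^5*be^2*k2^6*k3^4 + 2*q2*e3^2*al^2*be^3*k2^6*k3^4*V2^2 + 4*q2*s2*e3^2*al^3*be^3*k2^6*k3^4*V2 + 6*q2*s2^2*e3^2*al^4*be^3*k2^6*k3^4 + 4*q2*s1^2*e3^2*al^4*be^3*k2^6*k3^4 - 2*q2^2*e3^2*al^2*be^4*k2^6*k3^4*V2 - 6*q2^2*s2*e3^2*al^3*be^4*k2^6*k3^4 + 2*q2^3*e3^2*al^2*be^5*k2^6*k3^4 + 8*q1*s1*e3^2*al^3*be^3*k2^6*k3^4*V2 + 8*q1*s1*s2*e3^2*al^4*be^3*k2^6*k3^4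 - 8*q1*q2*s1*e3^2*al^3*be^4*k2^6*k3^4 - 4*q1^2*e3^2*al^2*be^4*k2^6*k3^4*V2 - 4*q1^2*s2*e3^2*al^3*be^4*k2^6*k3^4 + 4*q1^2*q2*e3^2*al^2*be^5*k2^6*k3^4) * hV2
    have bk24ne : (be^2*k2^4*k3^4) ≠ 0 := by
      exact mul_ne_zero (mul_ne_zero (pow_ne_zero 2 bene) (pow_ne_zero 4 k2ne)) (pow_ne_zero 4 k3ne)
    have C_P2 : (k3*U1-al*k2*NV*c1)^2+(k3*U2-al*k2*NV*c2)^2 = e3^2*al^2*k2^2*NV^2 :=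
      mul_left_cancel₀ bk24ne C_P2M
    have C_P1 : (U1-al*NV*b1)^2+(U2-al*NV*b2)^2 = e2^2*al^2*NV^2 := by
      linear_combination (NV^2) * T1 + (U1 + 2*V1*GV + q1*k2*NV - 2*b1*al*NV) * hU1 + (U2 + 2*V2*GV + q2*k2*NV - 2*b2*al*NV) * hU2 + (4*V2^2*GV + 4*V2^3*G2 + 4*V1*V2^2*G1 + 4*V1^2*GV + 4*V1^2*V2*G2 + 4*V1^3*G1 + 4*q2*k2*V2*NV + 4*q1*k2*V1*NV - 4*b2*al*V2*NV - 4*b1*al*V1*NV) * hGV + (-1*NV^2*G1 + 8*V1*V2^3*G2 + 4*V1^2*V2^2*G1 + 8*V1^3*V2*G2 + 4*V1^4*G1 + 4*q2*k2*V1*V2*NV + q1*k2*NV^2 + 4*q1*k2*V1^2*NV - 4*q1*k2*V1^2*V2^2 - 4*q1*k2*V1^4 - 4*b2*al*V1*V2*NV - 1*b1*al*NV^2 - 4*b1*al*V1^2*NV + 4*b1*al*V1^2*V2^2 + 4*b1*al*V1^4) * hG1 + (-1*NV^2*G2 + 4*V2^4*G2 + 4*V1^2*V2^2*G2 + q2*k2*NV^2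 + 4*q2*k2*V2^2*NV - 4*q2*k2*V2^4 - 4*q2*k2*V1^2*V2^2 + 4*q1*k2*V1*V2*NV - 8*q1*k2*V1*V2^3 - 8*q1*k2*V1^3*V2 - 1*b2*al*NV^2 - 4*b2*al*V2^2*NV + 4*b2*al*V2^4 + 4*b2*al*V1^2*V2^2 - 4*b1*al*V1*V2*NV + 8*b1*al*V1*V2^3 + 8*b1*al*V1^3*V2) * hG2 + (-4*q2^2*k2^2*V2^2 - 8*q1*q2*k2^2*V1*V2 - 4*q1^2*k2^2*V1^2 + 8*b2*q2*al*k2*V2^2 + 8*b2*q1*al*k2*V1*V2 - 4*b2^2*al^2*V2^2 + 8*b1*q2*al*k2*V1*V2 + 8*b1*q1*al*k2*V1^2 - 8*b1*b2*al^2*V1*V2 - 4*b1^2*al^2*V1^2) * hNV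
    have NUne : NU ≠ 0 := by
      intro h
      have hsum : U1^2+U2^2 = 0 := by rw [← hNU]; exact h
      obtain ⟨hU1z, hU2z⟩ := sum_sq_eq_zero hsum
      have key : al^2*NV^2*(b1^2+b2^2-e2^2) = 0 := by linear_combination (1) * C_P1 + (-1*U1 + 2*b1*al*NV) * hU1z + (-1*U2 + 2*b2*al*NV) * hU2z
      have h5 : al^2*NV^2 ≠ 0 := mul_ne_zero (pow_ne_zero 2 alne) (pow_ne_zero 2 NVne)
      rcases mul_eq_zero.mp key with h6 | h6
      · exact h5 h6
      · exact k2n (by linarith [sub_eq_zero.mp h6])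
    have Final1C : (al*k2*NV*U1-NU*b1)^2+(al*k2*NV*U2-NU*b2)^2 = e2^2*NU^2 := by
      linear_combination (k2*NU) * C_P1 + (-1*NU^2 + al^2*k2*NV^2*NU) * hk2 + (k2*NU - 1*al^2*k2^2*NV^2) * hNU
    have Final2CM : k3*((al*k2*NV*U1-NU*c1)^2+(al*k2*NV*U2-NU*c2)^2) = k3*(e3^2*NU^2) := by
      linear_combination (NU) * C_P2 + (-1*k3*NU^2 + al^2*k2^2*NV^2*NU) * hk3 + (k3^2*NU - 1*al^2*k2^2*k3*NV^2) * hNU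
    have Final2C : (al*k2*NV*U1-NU*c1)^2+(al*k2*NV*U2-NU*c2)^2 = e3^2*NU^2 :=
      mul_left_cancel₀ k3ne Final2CM
    refine ⟨al*k2*NV*U1/NU, al*k2*NV*U2/NU, ?_, ?_, ?_⟩
    · field_simp
      linear_combination Final1C
    · field_simp
      linear_combination Final2C
    · by_cases hC : CRS = 0
      · -- collinear branch
        have crUQ : U2*q1-U1*q2 = -2*GV*CRS := by linear_combination (-1*q2) * hU1 + (q1) * hU2 + (2*GV) * hCRS
        have crUQ0 : U2*q1-U1*q2 = 0 := by rw [crUQ, hC]; ring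
        have alqs : al*(q2*s1-q1*s2) = CRS := by linear_combination (-1) * hCRS + (-1*q2) * hV1 + (q1) * hV2
        have crqs0 : q2*s1-q1*s2 = 0 := by
          have hz : al*(q2*s1-q1*s2) = 0 := by rw [alqs, hC]
          exact (mul_eq_zero.mp hz).resolve_left alne
        have scoord1 : al*s1 = (q1*s1+q2*s2)*q1 := by linear_combination (q2) * crqs0 + (s1) * hal
        have scoord2 : al*s2 = (q1*s1+q2*s2)*q2 := by linear_combination (-1*q1) * crqs0 + (s2) * hal
        have rcoord1 : al*U1 = (U1*q1+U2*q2)*q1 := by linear_combination (-1*q2) * crUQ0 + (al - 1*q2^2 - 1*q1^2) * hU1 + (2*al*V1 - 2*q2^2*V1 - 2*q1^2*V1) * hGV + (2*al*V1^2 - 2*q2^2*V1^2 - 2*q1^2*V1^2) * hG1 + (2*al*V1*V2 - 2*q2^2*V1*V2 - 2*q1^2*V1*V2) * hG2 + (q1*al*k2 - 1*q1*q2^2*k2 - 1*q1^3*k2) * hNV + (-2*q2*al*k2*V2 + 2*q2^3*k2*V2 - 1*q1*al*k2*V1 - 1*q1*s1*al^2*k2 + q1*q2^2*k2*V1 + q1*q2^2*s1*al*k2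 + q1^2*al*be*k2 + 2*q1^2*q2*k2*V2 - 1*q1^2*q2^2*be*k2 + q1^3*k2*V1 + q1^3*s1*al*k2 - 1*q1^4*be*k2 + 2*b2*al^2*V2 - 2*b2*q2^2*al*V2 - 2*b2*q1^2*al*V2 + 2*b1*al^2*V1 + 2*b1*s1*al^3 - 2*b1*q2^2*al*V1 - 2*b1*q2^2*s1*al^2 - 2*b1*q1*al^2*be + 2*b1*q1*q2^2*al*be - 2*b1*q1^2*al*V1 - 2*b1*q1^2*s1*al^2 + 2*b1*q1^3*al*be) * hV1 + (-2*q2*s1*al^2*k2 + 2*q2^3*s1*al*k2 + q1*al*k2*V2 + q1*s2*al^2*k2 + q1*q2*al*be*k2 - 1*q1*q2^2*k2*V2 - 1*q1*q2^2*s2*al*k2 - 1*q1*q2^3*be*k2 + 2*q1^2*q2*s1*al*k2 - 1*q1^3*k2*V2 - 1*q1^3*s2*al*k2 - 1*q1^3*q2*be*k2 + 2*b2*s1*al^3 - 2*b2*q2^2*s1*al^2 - 2*b2*q1*al^2*be + 2*b2*q1*q2^2*al*be - 2*b2*q1^2*s1*al^2 + 2*b2*q1^3*al*be) * hV2 + (-2*q2*s1*s2*al^2*k2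 + 2*q2^2*s1*al*be*k2 + q1*s2^2*al^2*k2 - 1*q1*s1^2*al^2*k2 - 1*q1*q2^2*be^2*k2 + 2*q1^2*s1*al*be*k2 - 1*q1^3*be^2*k2 + 2*b2*s1*s2*al^3 - 2*b2*q2*s1*al^2*be - 2*b2*q1*s2*al^2*be + 2*b2*q1*q2*al*be^2 + 2*b1*s1^2*al^3 - 4*b1*q1*s1*al^2*be + 2*b1*q1^2*al*be^2) * hal
        have rcoord2 : al*U2 = (U1*q1+U2*q2)*q2 := by linear_combination (q1) * crUQ0 + (al - 1*q2^2 - 1*q1^2) * hU2 + (2*al*V2 - 2*q2^2*V2 - 2*q1^2*V2) * hGV + (2*al*V1*V2 - 2*q2^2*V1*V2 - 2*q1^2*V1*V2) * hG1 + (2*al*V2^2 - 2*q2^2*V2^2 - 2*q1^2*V2^2) * hG2 + (q2*al*k2 - 1*q2^3*k2 - 1*q1^2*q2*k2) * hNV + (q2*al*k2*V1 + q2*s1*al^2*k2 - 1*q2^3*k2*V1 - 1*q2^3*s1*al*k2 - 2*q1*al*k2*V2 - 1*q1*q2*al*be*k2 + 2*q1*q2^2*k2*V2 + q1*q2^3*be*k2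 - 1*q1^2*q2*k2*V1 - 1*q1^2*q2*s1*al*k2 + 2*q1^3*k2*V2 + q1^3*q2*be*k2 + 2*b1*al^2*V2 - 2*b1*q2^2*al*V2 - 2*b1*q1^2*al*V2) * hV1 + (-1*q2*al*k2*V2 - 1*q2*s2*al^2*k2 + q2^2*al*be*k2 + q2^3*k2*V2 + q2^3*s2*al*k2 - 1*q2^4*be*k2 - 2*q1*s1*al^2*k2 + 2*q1*q2^2*s1*al*k2 + 2*q1^2*al*be*k2 + q1^2*q2*k2*V2 + q1^2*q2*s2*al*k2 - 3*q1^2*q2^2*be*k2 + 2*q1^3*s1*al*k2 - 2*q1^4*be*k2 + 2*b2*al^2*V2 + 2*b2*s2*al^3 - 2*b2*q2*al^2*be - 2*b2*q2^2*al*V2 - 2*b2*q2^2*s2*al^2 + 2*b2*q2^3*al*be - 2*b2*q1^2*al*V2 - 2*b2*q1^2*s2*al^2 + 2*b2*q1^2*q2*al*be + 2*b1*s1*al^3 - 2*b1*q2^2*s1*al^2 - 2*b1*q1*al^2*be + 2*b1*q1*q2^2*al*be - 2*b1*q1^2*s1*al^2 + 2*b1*q1^3*al*be) * hV2 + (-1*q2*s2^2*al^2*k2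 + q2*s1^2*al^2*k2 + 2*q2^2*s2*al*be*k2 - 1*q2^3*be^2*k2 - 2*q1*s1*s2*al^2*k2 + 2*q1^2*s2*al*be*k2 - 1*q1^2*q2*be^2*k2 + 2*b2*s2^2*al^3 - 4*b2*q2*s2*al^2*be + 2*b2*q2^2*al*be^2 + 2*b1*s1*s2*al^3 - 2*b1*q2*s1*al^2*be - 2*b1*q1*s2*al^2*be + 2*b1*q1*q2*al*be^2) * hal
        refine Or.inr ⟨q1, q2, 1, al*k2*NV*(U1*q1+U2*q2)/(al*NU), (q1*s1+q2*s2)/al,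
          by ring, by ring, ?_, ?_, ?_, ?_⟩
        · field_simp
          linear_combination rcoord1
        · field_simp
          linear_combination rcoord2
        · field_simp
          linear_combination scoord1
        · field_simp
          linear_combination scoord2
      · -- cospherical branch
        have haux : al*(s2*V1-s1*V2) = be*CRS := by linear_combination (-1*be) * hCRS + (s2*al - 1*q2*be) * hV1 + (-1*s1*al + q1*be) * hV2
        have haux2 : U2*V1-U1*V2 = k2*NV*CRS := by linear_combination (-1*V2) * hU1 + (V1) * hU2 + (-1*k2*NV) * hCRS
        refine Or.inl ⟨-(al*V2)/(2*CRS), al*V1/(2*CRS), ?_, ?_, ?_⟩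
        · field_simp
          linear_combination (4*al*CRS)*hCRS - (4*CRS^2)*hal
        · field_simp
          linear_combination (-4*k2*NV*CRS*NU)*haux2 - (4*k2^2*NV^2*CRS^2)*hNU
        · field_simp
          linear_combination (-4*CRS)*haux - (4*CRS^2)*hbe

/-- Circles-only core of the quadrilateral-circumcircle lemma: four cyclically
orthogonal circles, with common points `p` of `C4,C1`, `q` of `C1,C2`, `s` of
`C3,C4`, and `p` on neither `C2` nor `C3`; then there is a common point `r` of
`C2,C3` with `p,q,r,s` concyclic or collinear. -/
theorem stmt_0 (o1 o2 o3 o4 p q s : EuclideanSpace ℝ (Fin 2))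
    (r1 r2 r3 r4 : ℝ) (hr1 : 0 < r1) (hr2 : 0 < r2) (hr3 : 0 < r3) (hr4 : 0 < r4)
    (h12 : dist o1 o2 ^ 2 = r1 ^ 2 + r2 ^ 2)
    (h23 : dist o2 o3 ^ 2 = r2 ^ 2 + r3 ^ 2)
    (h34 : dist o3 o4 ^ 2 = r3 ^ 2 + r4 ^ 2)
    (h41 : dist o4 o1 ^ 2 = r4 ^ 2 + r1 ^ 2)
    (hp4 : dist p o4 = r4) (hp1 : dist p o1 = r1)
    (hq1 : dist q o1 = r1) (hq2 : dist q o2 = r2)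
    (hs3 : dist s o3 = r3) (hs4 : dist s o4 = r4)
    (hp2 : dist p o2 ≠ r2) (hp3 : dist p o3 ≠ r3) :
    ∃ r : EuclideanSpace ℝ (Fin 2), dist r o2 = r2 ∧ dist r o3 = r3 ∧
      (EuclideanGeometry.Cospherical ({p, q, r, s} : Set (EuclideanSpace ℝ (Fin 2))) ∨
        Collinear ℝ ({p, q, r, s} : Set (EuclideanSpace ℝ (Fin 2)))) := by
  have H1' : (o1 0 - p 0)^2 + (o1 1 - p 1)^2 = r1^2 := by
    have h : dist p o1 ^ 2 = r1 ^ 2 := by rw [hp1]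
    rw [dist_sq] at h
    linear_combination h
  have H4' : (o4 0 - p 0)^2 + (o4 1 - p 1)^2 = r4^2 := by
    have h : dist p o4 ^ 2 = r4 ^ 2 := by rw [hp4]
    rw [dist_sq] at h
    linear_combination h
  have H12' : ((o1 0 - p 0)-(o2 0 - p 0))^2 + ((o1 1 - p 1)-(o2 1 - p 1))^2 = r1^2 + r2^2 := by
    have h := h12
    rw [dist_sq] at h
    linear_combination h
  have H23' : ((o2 0 - p 0)-(o3 0 - p 0))^2 + ((o2 1 - p 1)-(o3 1 - p 1))^2 = r2^2 + r3^2 := by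
    have h := h23
    rw [dist_sq] at h
    linear_combination h
  have H34' : ((o3 0 - p 0)-(o4 0 - p 0))^2 + ((o3 1 - p 1)-(o4 1 - p 1))^2 = r3^2 + r4^2 := by
    have h := h34
    rw [dist_sq] at h
    linear_combination h
  have H41' : ((o4 0 - p 0)-(o1 0 - p 0))^2 + ((o4 1 - p 1)-(o1 1 - p 1))^2 = r4^2 + r1^2 := by
    have h := h41
    rw [dist_sq] at h
    linear_combination h
  have Hq1' : ((q 0 - p 0)-(o1 0 - p 0))^2 + ((q 1 - p 1)-(o1 1 - p 1))^2 = r1^2 := by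
    have h : dist q o1 ^ 2 = r1 ^ 2 := by rw [hq1]
    rw [dist_sq] at h
    linear_combination h
  have Hq2' : ((q 0 - p 0)-(o2 0 - p 0))^2 + ((q 1 - p 1)-(o2 1 - p 1))^2 = r2^2 := by
    have h : dist q o2 ^ 2 = r2 ^ 2 := by rw [hq2]
    rw [dist_sq] at h
    linear_combination h
  have Hs3' : ((s 0 - p 0)-(o3 0 - p 0))^2 + ((s 1 - p 1)-(o3 1 - p 1))^2 = r3^2 := by
    have h : dist s o3 ^ 2 = r3 ^ 2 := by rw [hs3]
    rw [dist_sq] at h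
    linear_combination h
  have Hs4' : ((s 0 - p 0)-(o4 0 - p 0))^2 + ((s 1 - p 1)-(o4 1 - p 1))^2 = r4^2 := by
    have h : dist s o4 ^ 2 = r4 ^ 2 := by rw [hs4]
    rw [dist_sq] at h
    linear_combination h
  have k2n' : (o2 0 - p 0)^2 + (o2 1 - p 1)^2 ≠ r2^2 := by
    intro h
    apply hp2
    refine sqeq dist_nonneg hr2.le ?_
    rw [dist_sq]
    linear_combination h
  have k3n' : (o3 0 - p 0)^2 + (o3 1 - p 1)^2 ≠ r3^2 := by
    intro h
    apply hp3
    refine sqeq dist_nonneg hr3.le ?_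
    rw [dist_sq]
    linear_combination h
  obtain ⟨rv1, rv2, hB, hC, hbr⟩ := scalar_main (o1 0 - p 0) (o1 1 - p 1) (o2 0 - p 0)
    (o2 1 - p 1) (o3 0 - p 0) (o3 1 - p 1) (o4 0 - p 0) (o4 1 - p 1) (q 0 - p 0) (q 1 - p 1)
    (s 0 - p 0) (s 1 - p 1) r1 r2 r3 r4 hr1 hr2 hr3 hr4 H1' H4' H12' H23' H34' H41'
    Hq1' Hq2' Hs3' Hs4' k2n' k3n'
  refine ⟨(WithLp.equiv 2 (Fin 2 → ℝ)).symm ![p 0 + rv1, p 1 + rv2], ?_, ?_, ?_⟩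
  · refine sqeq dist_nonneg hr2.le ?_
    rw [dist_sq]
    show (p 0 + rv1 - o2 0)^2 + (p 1 + rv2 - o2 1)^2 = r2^2
    linear_combination hB
  · refine sqeq dist_nonneg hr3.le ?_
    rw [dist_sq]
    show (p 0 + rv1 - o3 0)^2 + (p 1 + rv2 - o3 1)^2 = r3^2
    linear_combination hC
  · rcases hbr with ⟨z1, z2, hq', hr', hs'⟩ | ⟨v1, v2, t1, t2, t3, hv1, hv2, hv3, hv4, hv5, hv6⟩
    · left
      refine ⟨(WithLp.equiv 2 (Fin 2 → ℝ)).symm ![p 0 + z1, p 1 + z2],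
        dist p ((WithLp.equiv 2 (Fin 2 → ℝ)).symm ![p 0 + z1, p 1 + z2]), ?_⟩
      intro x hx
      have hpd : dist p ((WithLp.equiv 2 (Fin 2 → ℝ)).symm ![p 0 + z1, p 1 + z2]) ^ 2
          = z1^2 + z2^2 := by
        rw [dist_sq]
        show (p 0 - (p 0 + z1))^2 + (p 1 - (p 1 + z2))^2 = z1^2+z2^2
        ring
      simp only [Set.mem_insert_iff, Set.mem_singleton_iff] at hx
      rcases hx with rfl | rfl | rfl | rfl
      · rfl
      · refine sqeq dist_nonneg dist_nonneg ?_
        rw [dist_sq, hpd]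
        show (x 0 - (p 0 + z1))^2 + (x 1 - (p 1 + z2))^2 = z1^2+z2^2
        linear_combination hq'
      · refine sqeq dist_nonneg dist_nonneg ?_
        rw [dist_sq, hpd]
        show (p 0 + rv1 - (p 0 + z1))^2 + (p 1 + rv2 - (p 1 + z2))^2 = z1^2+z2^2
        linear_combination hr'
      · refine sqeq dist_nonneg dist_nonneg ?_
        rw [dist_sq, hpd]
        show (x 0 - (p 0 + z1))^2 + (x 1 - (p 1 + z2))^2 = z1^2+z2^2
        linear_combination hs'
    · right
      rw [collinear_iff_exists_forall_eq_smul_vadd]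
      refine ⟨p, (WithLp.equiv 2 (Fin 2 → ℝ)).symm ![v1, v2], ?_⟩
      intro x hx
      simp only [Set.mem_insert_iff, Set.mem_singleton_iff] at hx
      rcases hx with rfl | rfl | rfl | rfl
      · exact ⟨0, pt_ext _ _ (by show x 0 = 0*v1 + x 0; ring) (by show x 1 = 0*v2 + x 1; ring)⟩
      · exact ⟨t1, pt_ext _ _ (by show x 0 = t1*v1 + p 0; linear_combination hv1)
          (by show x 1 = t1*v2 + p 1; linear_combination hv2)⟩
      · exact ⟨t2, pt_ext _ _ (by show p 0 + rv1 = t2*v1 + p 0; linear_combination hv3)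
          (by show p 1 + rv2 = t2*v2 + p 1; linear_combination hv4)⟩
      · exact ⟨t3, pt_ext _ _ (by show x 0 = t3*v1 + p 0; linear_combination hv5)
          (by show x 1 = t3*v2 + p 1; linear_combination hv6)⟩
end

section
/- Let A be the circle in the Euclidean plane with center a and radius α > 0, and B the circle with center b and radius β > 0, and suppose A and B are orthogonal: dist a b ^ 2 = α^2 + β^2. Let q be a point of A whose first coordinate equals the first coordinate of a (so the vector q - a is vertical), and let s be a point of B whose second coordinate equals the second coordinate of b (so the vector s - b is horizontal). Then there exists a common point r of A and B (dist r a = α and dist r b = β) such that q, r, s are collinear: Collinear ℝ {q, r, s}. -/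
private lemma eq_of_sq_eq_sq' {x c : ℝ} (hx : 0 ≤ x) (hc : 0 ≤ c) (h : x ^ 2 = c ^ 2) :
    x = c := by
  apply le_antisymm <;> nlinarith

private lemma dist_sq_coords (x y : EuclideanSpace ℝ (Fin 2)) :
    dist x y ^ 2 = (x 0 - y 0) ^ 2 + (x 1 - y 1) ^ 2 := by
  rw [EuclideanSpace.dist_eq, Real.sq_sqrt (by positivity)]
  simp [Fin.sum_univ_two, Real.dist_eq, sq_abs]

/-- Inverted form of the key step of the quadrilateral-circumcircle lemma:
for orthogonal circles `A` (center `a`, radius `α`) and `B` (center `b`,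
radius `β`), a point `q` of `A` vertically above/below `a` and a point `s` of
`B` horizontally displaced from `b` are collinear with some common point `r`
of the two circles. -/
theorem stmt_1 (a b q s : EuclideanSpace ℝ (Fin 2)) (α β : ℝ)
    (hα : 0 < α) (hβ : 0 < β)
    (horth : dist a b ^ 2 = α ^ 2 + β ^ 2)
    (hqA : dist q a = α) (hq0 : q 0 = a 0)
    (hsB : dist s b = β) (hs1 : s 1 = b 1) :
    ∃ r : EuclideanSpace ℝ (Fin 2), dist r a = α ∧ dist r b = β ∧
      Collinear ℝ ({q, r, s} : Set (EuclideanSpace ℝ (Fin 2))) := by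
  have hA : (q 1 - a 1) ^ 2 = α ^ 2 := by
    have h := dist_sq_coords q a
    rw [hqA, hq0, sub_self] at h
    nlinarith
  have hB : (s 0 - b 0) ^ 2 = β ^ 2 := by
    have h := dist_sq_coords s b
    rw [hsB, hs1, sub_self] at h
    nlinarith
  have hO : (a 0 - b 0) ^ 2 + (a 1 - b 1) ^ 2 = α ^ 2 + β ^ 2 :=
    (dist_sq_coords a b).symm.trans horth
  obtain ⟨t, ht⟩ : ∃ t : ℝ,
      t * ((s 0 - a 0) ^ 2 + (b 1 - q 1) ^ 2) = 2 * (q 1 - a 1) * (q 1 - b 1) := by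
    by_cases hD : (s 0 - a 0) ^ 2 + (b 1 - q 1) ^ 2 = 0
    · refine ⟨0, ?_⟩
      have h1 : b 1 - q 1 = 0 := by
        nlinarith [sq_nonneg (s 0 - a 0), sq_nonneg (b 1 - q 1)]
      linear_combination (2 * (q 1 - a 1)) * h1
    · exact ⟨2 * (q 1 - a 1) * (q 1 - b 1) / ((s 0 - a 0) ^ 2 + (b 1 - q 1) ^ 2),
        by field_simp⟩
  refine ⟨AffineMap.lineMap q s t, ?_, ?_, ?_⟩
  · apply eq_of_sq_eq_sq' dist_nonneg hα.le
    rw [dist_sq_coords]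
    have h0 : (AffineMap.lineMap q s t : EuclideanSpace ℝ (Fin 2)) 0
        = q 0 + t * (s 0 - q 0) := by
      simp [AffineMap.lineMap_apply]; ring
    have h1 : (AffineMap.lineMap q s t : EuclideanSpace ℝ (Fin 2)) 1
        = q 1 + t * (s 1 - q 1) := by
      simp [AffineMap.lineMap_apply]; ring
    rw [h0, h1, hq0, hs1]
    linear_combination t * ht + hA
  · apply eq_of_sq_eq_sq' dist_nonneg hβ.le
    rw [dist_sq_coords]
    have h0 : (AffineMap.lineMap q s t : EuclideanSpace ℝ (Fin 2)) 0
        = q 0 + t * (s 0 - q 0) := by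
      simp [AffineMap.lineMap_apply]; ring
    have h1 : (AffineMap.lineMap q s t : EuclideanSpace ℝ (Fin 2)) 1
        = q 1 + t * (s 1 - q 1) := by
      simp [AffineMap.lineMap_apply]; ring
    rw [h0, h1, hq0, hs1]
    linear_combination (t - 1) * ht + (t - 1) * hA + t * hB + (1 - t) * hO
  · rw [Set.insert_comm]
    exact collinear_insert_of_mem_affineSpan_pair (AffineMap.lineMap_mem_affineSpan_pair t q s)
end

section
/- Let A and B be orthogonal circles in the Euclidean plane, with centers a, b and radii α, β > 0 satisfying dist a b ^ 2 = α^2 + β^2. Then there exist a point c and a radius ρ > 0 such that every common point p of A and B (dist p a = α and dist p b = β) satisfies dist p c = ρ, InnerProductGeometry.angle (p - a) (p - c) = π/4, and InnerProductGeometry.angle (p - b) (p - c) = π/4. In other words, there is a circle through both intersection points of A and B that makes a 45° angle with each of A and B at those points. -/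
open Real
open RealInnerProductSpace

/-- For orthogonal circles `A` and `B` there is a circle through both of
their common points making a 45° angle with each of them there. -/
theorem stmt_3 (a b : EuclideanSpace ℝ (Fin 2)) (α β : ℝ)
    (hα : 0 < α) (hβ : 0 < β)
    (horth : dist a b ^ 2 = α ^ 2 + β ^ 2) :
    ∃ (c : EuclideanSpace ℝ (Fin 2)) (ρ : ℝ), 0 < ρ ∧
      ∀ p : EuclideanSpace ℝ (Fin 2), dist p a = α → dist p b = β →
        dist p c = ρ ∧
          InnerProductGeometry.angle (p - a) (p - c) = π / 4 ∧
          InnerProductGeometry.angle (p - b) (p - c) = π / 4 := by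
  have hab0 : (0:ℝ) < α + β := by linarith
  refine ⟨(α+β)⁻¹ • (β • a + α • b), Real.sqrt 2 * α * β / (α+β), by positivity, ?_⟩
  intro p hpa hpb
  set u := p - a with hu
  set v := p - b with hv
  have hnu : ‖u‖ = α := by rw [hu, ← dist_eq_norm]; exact hpa
  have hnv : ‖v‖ = β := by rw [hv, ← dist_eq_norm]; exact hpb
  have habvu : a - b = v - u := by rw [hu, hv]; abel
  have huv : ⟪u, v⟫ = 0 := by
    have h1 : ‖v - u‖^2 = α^2 + β^2 := by
      rw [← habvu, ← dist_eq_norm]; exact horth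
    have h2 := norm_sub_sq_real v u
    rw [hnu, hnv, real_inner_comm u v] at h2
    nlinarith
  have key : (α+β) • (p - (α+β)⁻¹ • (β • a + α • b)) = β • u + α • v := by
    rw [smul_sub, smul_inv_smul₀ (ne_of_gt hab0), hu, hv]
    module
  have hw : p - (α+β)⁻¹ • (β • a + α • b) = (α+β)⁻¹ • (β • u + α • v) := by
    rw [← key, inv_smul_smul₀ (ne_of_gt hab0)]
  set w := p - (α+β)⁻¹ • (β • a + α • b) with hwdef
  have hsq2 : (0:ℝ) < Real.sqrt 2 := by positivity
  have hN : ‖β • u + α • v‖ = Real.sqrt 2 * (α * β) := by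
    have h2 : ‖β • u + α • v‖^2 = 2 * (α*β)^2 := by
      have := norm_add_sq_real (β • u) (α • v)
      rw [norm_smul, norm_smul, real_inner_smul_left, real_inner_smul_right,
        hnu, hnv, huv] at this
      rw [this]
      rw [Real.norm_eq_abs, Real.norm_eq_abs, abs_of_pos hβ, abs_of_pos hα]
      ring
    have h3 : ‖β • u + α • v‖ = Real.sqrt (2 * (α*β)^2) := by
      rw [← h2, Real.sqrt_sq (norm_nonneg _)]
    rw [h3, Real.sqrt_mul (by norm_num), Real.sqrt_sq (by positivity)]
  have hnw : ‖w‖ = Real.sqrt 2 * α * β / (α+β) := by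
    rw [hw, norm_smul, hN, Real.norm_eq_abs, abs_of_pos (inv_pos.mpr hab0)]
    field_simp
  have hcos : Real.arccos (Real.sqrt 2 / 2) = π / 4 := by
    rw [show (Real.sqrt 2 / 2 : ℝ) = Real.cos (π/4) from (Real.cos_pi_div_four).symm]
    exact Real.arccos_cos (by positivity) (by linarith [Real.pi_pos])
  have hiuw : ⟪u, w⟫ = (α+β)⁻¹ * (α^2 * β) := by
    rw [hw, real_inner_smul_right, inner_add_right, real_inner_smul_right,
      real_inner_smul_right, real_inner_self_eq_norm_sq, hnu, huv]
    ring
  have hivw : ⟪v, w⟫ = (α+β)⁻¹ * (α * β^2) := by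
    rw [hw, real_inner_smul_right, inner_add_right, real_inner_smul_right,
      real_inner_smul_right, real_inner_self_eq_norm_sq, hnv, real_inner_comm u v, huv]
    ring
  have hs2 : Real.sqrt 2 * Real.sqrt 2 = 2 := Real.mul_self_sqrt (by norm_num)
  refine ⟨by rw [dist_eq_norm, ← hwdef, hnw], ?_, ?_⟩
  · rw [InnerProductGeometry.angle, hiuw, hnu, hnw, ← hcos]
    congr 1
    have hs2' : Real.sqrt 2 ^ 2 = 2 := Real.sq_sqrt (by norm_num)
    field_simp
    ring_nf
    rw [hs2']
  · rw [InnerProductGeometry.angle, hivw, hnv, hnw, ← hcos]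
    congr 1
    have hs2' : Real.sqrt 2 ^ 2 = 2 := Real.sq_sqrt (by norm_num)
    field_simp
    ring_nf
    rw [hs2']
end

section
/- Let A, B, C be three affinely independent points in the Euclidean plane. Then there exists a point X such that dist X A * dist B C = dist X B * dist A C and dist X B * dist A C = dist X C * dist A B; that is, a point whose distances to the three vertices are inversely proportional to the lengths of the opposite sides (an isodynamic point of the triangle). -/
/-- Key complex-number lemma: given `t` on the unit circle with `|1 + t| = 1`
(a primitive cube root of unity), if the linear equation has a solution we get an
isodynamic point. -/
lemma key_isodynamic (a b c t : ℂ) (ht1 : ‖t‖ = 1)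
    (ht2 : ‖1 + t‖ = 1) (hd : (a - b) - t * (b - c) ≠ 0) :
    ∃ x : ℂ,
      dist x a * dist b c = dist x b * dist a c ∧
      dist x b * dist a c = dist x c * dist a b := by
  refine ⟨(c * (a - b) - t * a * (b - c)) / ((a - b) - t * (b - c)), ?_, ?_⟩ <;>
  · set x : ℂ := (c * (a - b) - t * a * (b - c)) / ((a - b) - t * (b - c)) with hx
    have hw : (x - c) * (a - b) = t * ((x - a) * (b - c)) := by
      rw [hx]; field_simp; ring
    have hv : (x - b) * (a - c) = (x - a) * (b - c) + (x - c) * (a - b) := by ring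
    have e1 : dist x a * dist b c = ‖(x - a) * (b - c)‖ := by
      rw [Complex.dist_eq, Complex.dist_eq, norm_mul]
    have e2 : dist x b * dist a c = ‖(x - a) * (b - c)‖ := by
      rw [Complex.dist_eq, Complex.dist_eq, ← norm_mul, hv, hw]
      have : (x - a) * (b - c) + t * ((x - a) * (b - c))
          = (1 + t) * ((x - a) * (b - c)) := by ring
      rw [this, norm_mul, ht2, one_mul]
    have e3 : dist x c * dist a b = ‖(x - a) * (b - c)‖ := by
      rw [Complex.dist_eq, Complex.dist_eq, ← norm_mul, hw, norm_mul, ht1, one_mul]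
    simp [e1, e2, e3]

lemma omega_abs : ‖(⟨-(1/2), Real.sqrt 3 / 2⟩ : ℂ)‖ = 1 := by
  rw [Complex.norm_def, Complex.normSq_mk]
  have h3 : Real.sqrt 3 ^ 2 = 3 := Real.sq_sqrt (by norm_num)
  rw [show -(1/2 : ℝ) * -(1/2) + Real.sqrt 3 / 2 * (Real.sqrt 3 / 2)
      = (1 + Real.sqrt 3 ^ 2) / 4 by ring, h3]
  norm_num

lemma one_add_omega_abs : ‖(1 + ⟨-(1/2), Real.sqrt 3 / 2⟩ : ℂ)‖ = 1 := by
  have : (1 + (⟨-(1/2), Real.sqrt 3 / 2⟩ : ℂ)) = ⟨1/2, Real.sqrt 3 / 2⟩ := by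
    apply Complex.ext <;> simp <;> norm_num
  rw [this, Complex.norm_def, Complex.normSq_mk]
  have h3 : Real.sqrt 3 ^ 2 = 3 := Real.sq_sqrt (by norm_num)
  rw [show (1/2 : ℝ) * (1/2) + Real.sqrt 3 / 2 * (Real.sqrt 3 / 2)
      = (1 + Real.sqrt 3 ^ 2) / 4 by ring, h3]
  norm_num

lemma complex_isodynamic (a b c : ℂ) (hbc : b ≠ c) :
    ∃ x : ℂ,
      dist x a * dist b c = dist x b * dist a c ∧
      dist x b * dist a c = dist x c * dist a b := by
  set ω : ℂ := ⟨-(1/2), Real.sqrt 3 / 2⟩ with hω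
  set ω' : ℂ := ⟨-(1/2), -(Real.sqrt 3 / 2)⟩ with hω'
  have hω'a : ‖ω'‖ = 1 := by
    have : ω' = starRingEnd ℂ ω := by apply Complex.ext <;> simp [hω, hω']
    rw [this, Complex.norm_conj]; exact omega_abs
  have hω'a2 : ‖1 + ω'‖ = 1 := by
    have : 1 + ω' = starRingEnd ℂ (1 + ω) := by
      apply Complex.ext <;> simp [hω, hω']
    rw [this, Complex.norm_conj]; exact one_add_omega_abs
  by_cases hd : (a - b) - ω * (b - c) ≠ 0
  · exact key_isodynamic a b c ω omega_abs one_add_omega_abs hd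
  · apply key_isodynamic a b c ω' hω'a hω'a2
    push_neg at hd
    intro hd'
    have h1 : (ω - ω') * (b - c) = 0 := by
      have := sub_eq_zero.mpr (hd.trans hd'.symm)
      linear_combination -this
    have hne : ω ≠ ω' := by
      intro h
      have := congrArg Complex.im h
      simp [hω, hω'] at this
      have h3 : (0:ℝ) < Real.sqrt 3 := Real.sqrt_pos.mpr (by norm_num)
      linarith
    rcases mul_eq_zero.mp h1 with h | h
    · exact hne (sub_eq_zero.mp h)
    · exact hbc (sub_eq_zero.mp h)

/-- Every triangle has an isodynamic point: a point whose distances to the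
vertices are inversely proportional to the opposite side lengths. -/
theorem stmt_4 (A B C : EuclideanSpace ℝ (Fin 2))
    (hABC : AffineIndependent ℝ ![A, B, C]) :
    ∃ X : EuclideanSpace ℝ (Fin 2),
      dist X A * dist B C = dist X B * dist A C ∧
      dist X B * dist A C = dist X C * dist A B := by
  let e : ℂ ≃ₗᵢ[ℝ] EuclideanSpace ℝ (Fin 2) :=
    Complex.isometryOfOrthonormal (EuclideanSpace.basisFun (Fin 2) ℝ)
  have hbc : B ≠ C := by
    intro h
    have : (1 : Fin 3) = 2 := hABC.injective (show ![A,B,C] 1 = ![A,B,C] 2 by simpa using h)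
    simp at this
  have hbc' : e.symm B ≠ e.symm C := fun h => hbc (by
    have := congrArg e h; simpa using this)
  obtain ⟨x, h1, h2⟩ := complex_isodynamic (e.symm A) (e.symm B) (e.symm C) hbc'
  refine ⟨e x, ?_, ?_⟩
  · have dA : dist (e x) A = dist x (e.symm A) := by
      rw [← e.dist_map x (e.symm A), e.apply_symm_apply]
    have dB : dist (e x) B = dist x (e.symm B) := by
      rw [← e.dist_map x (e.symm B), e.apply_symm_apply]
    have dBC : dist B C = dist (e.symm B) (e.symm C) := (e.symm.dist_map B C).symm
    have dAC : dist A C = dist (e.symm A) (e.symm C) := (e.symm.dist_map A C).symm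
    rw [dA, dB, dBC, dAC]; exact h1
  · have dB : dist (e x) B = dist x (e.symm B) := by
      rw [← e.dist_map x (e.symm B), e.apply_symm_apply]
    have dC : dist (e x) C = dist x (e.symm C) := by
      rw [← e.dist_map x (e.symm C), e.apply_symm_apply]
    have dAC : dist A C = dist (e.symm A) (e.symm C) := (e.symm.dist_map A C).symm
    have dAB : dist A B = dist (e.symm A) (e.symm B) := (e.symm.dist_map A B).symm
    rw [dB, dC, dAC, dAB]; exact h2
end

section
/- Let A, B, C be three affinely independent points in the Euclidean plane, let a = dist B C, b = dist A C, c = dist A B be the side lengths, and let α = ∠ B A C, β = ∠ A B C, γ = ∠ A C B be the (unoriented) interior angles. Define the barycentric weights wA = a * Real.sin (α + π/3), wB = b * Real.sin (β + π/3), wC = c * Real.sin (γ + π/3). Then wA + wB + wC > 0, and the point X = (wA + wB + wC)⁻¹ • (wA • A + wB • B + wC • C) (the affine combination of A, B, C with these weights, the points being regarded as vectors of EuclideanSpace ℝ (Fin 2)) satisfies a * dist X A = b * dist X B and b * dist X B = c * dist X C. -/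
open Real EuclideanGeometry

private lemma aux_pqr {p q r : ℝ} (hp : 0 < p) (hq : 0 < q) (h : 0 < p*q - r^2) :
    0 < p + q - r := by
  nlinarith [sq_nonneg (p - q), sq_nonneg (p + q - r), mul_pos hp hq]

private lemma aux_pos {K W : ℝ} (hK : 0 < K) (h : 0 < K * W) : 0 < W := by
  by_contra hW
  push_neg at hW
  nlinarith

private lemma normsq2 {V : Type*} [NormedAddCommGroup V] [InnerProductSpace ℝ V]
    (u v : V) (x y : ℝ) :
    ‖x • u + y • v‖^2 = x^2*‖u‖^2 + 2*(x*y)*(inner ℝ u v : ℝ) + y^2*‖v‖^2 := by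
  rw [@norm_add_sq_real, norm_smul, norm_smul, real_inner_smul_left, real_inner_smul_right]
  simp [mul_pow, sq_abs]
  ring

/-- The first isodynamic point as a barycentric combination with weights
`a·sin(α + π/3) : b·sin(β + π/3) : c·sin(γ + π/3)`. -/
theorem stmt_5 (A B C : EuclideanSpace ℝ (Fin 2))
    (hABC : AffineIndependent ℝ ![A, B, C]) :
    let a := dist B C
    let b := dist A C
    let c := dist A B
    let α := ∠ B A C
    let β := ∠ A B C
    let γ := ∠ A C B
    let wA := a * Real.sin (α + π / 3)
    let wB := b * Real.sin (β + π / 3)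
    let wC := c * Real.sin (γ + π / 3)
    let X := (wA + wB + wC)⁻¹ • (wA • A + wB • B + wC • C)
    0 < wA + wB + wC ∧
      a * dist X A = b * dist X B ∧ b * dist X B = c * dist X C := by
  intro a b c α β γ wA wB wC X
  -- basic abbreviations
  set u : EuclideanSpace ℝ (Fin 2) := B - A with hu
  set v : EuclideanSpace ℝ (Fin 2) := C - A with hv
  set p : ℝ := ‖u‖^2 with hp
  set q : ℝ := ‖v‖^2 with hq
  set r : ℝ := (inner ℝ u v : ℝ) with hr
  set s : ℝ := Real.sqrt 3 with hsdef
  set t : ℝ := Real.sqrt (p*q - r^2) with htdef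
  -- distinctness of the vertices
  have hinj := hABC.injective
  have hAB : A ≠ B := by
    intro h
    exact (by decide : (0:Fin 3) ≠ 1) (hinj (show ![A,B,C] 0 = ![A,B,C] 1 by simpa using h))
  have hAC : A ≠ C := by
    intro h
    exact (by decide : (0:Fin 3) ≠ 2) (hinj (show ![A,B,C] 0 = ![A,B,C] 2 by simpa using h))
  have hBC : B ≠ C := by
    intro h
    exact (by decide : (1:Fin 3) ≠ 2) (hinj (show ![A,B,C] 1 = ![A,B,C] 2 by simpa using h))
  have hapos : 0 < a := dist_pos.2 hBC
  have hbpos : 0 < b := dist_pos.2 hAC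
  have hcpos : 0 < c := dist_pos.2 hAB
  -- not collinear
  have hncol : ¬ Collinear ℝ ({A, B, C} : Set (EuclideanSpace ℝ (Fin 2))) :=
    affineIndependent_iff_not_collinear_set.1 hABC
  -- side lengths in terms of p q r
  have hcu : c = ‖u‖ := by rw [show c = dist A B from rfl, dist_eq_norm, hu, norm_sub_rev]
  have hbv : b = ‖v‖ := by rw [show b = dist A C from rfl, dist_eq_norm, hv, norm_sub_rev]
  have ha2 : a ^ 2 = p + q - 2*r := by
    rw [show a = dist B C from rfl, dist_eq_norm,
      show B - C = u - v by rw [hu, hv]; abel, @norm_sub_sq_real, hp, hq, hr]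
    ring
  have hb2 : b ^ 2 = q := by rw [hbv, hq]
  have hc2 : c ^ 2 = p := by rw [hcu, hp]
  -- angle identities
  have hαeq : α = InnerProductGeometry.angle u v := rfl
  have hβeq : β = InnerProductGeometry.angle (-u) (v - u) := by
    show EuclideanGeometry.angle A B C = _
    rw [EuclideanGeometry.angle, show A -ᵥ B = -u by rw [hu, vsub_eq_sub]; abel,
      show C -ᵥ B = v - u by rw [hu, hv, vsub_eq_sub]; abel]
  have hγeq : γ = InnerProductGeometry.angle (-v) (u - v) := by
    show EuclideanGeometry.angle A C B = _
    rw [EuclideanGeometry.angle, show A -ᵥ C = -v by rw [hv, vsub_eq_sub]; abel,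
      show B -ᵥ C = u - v by rw [hu, hv, vsub_eq_sub]; abel]
  have hsinα : Real.sin α * (c * b) = t := by
    rw [hαeq, hcu, hbv, InnerProductGeometry.sin_angle_mul_norm_mul_norm, htdef]
    congr 1
    simp only [real_inner_self_eq_norm_sq, hp, hq, hr]
    ring
  have hcosα : Real.cos α * (c * b) = r := by
    rw [hαeq, hcu, hbv, InnerProductGeometry.cos_angle_mul_norm_mul_norm, hr]
  have hsinβ : Real.sin β * (c * a) = t := by
    rw [hβeq, show c = ‖-u‖ by rw [norm_neg, hcu],
      show a = ‖v - u‖ by rw [show a = dist B C from rfl, dist_eq_norm,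
        show B - C = u - v by rw [hu, hv]; abel, norm_sub_rev],
      InnerProductGeometry.sin_angle_mul_norm_mul_norm, htdef]
    congr 1
    simp only [inner_neg_left, inner_neg_right, inner_sub_left, inner_sub_right,
      real_inner_self_eq_norm_sq, neg_neg, neg_sub]
    simp only [real_inner_comm v u, hp, hq, hr]
    ring
  have hcosβ : Real.cos β * (c * a) = p - r := by
    rw [hβeq, show c = ‖-u‖ by rw [norm_neg, hcu],
      show a = ‖v - u‖ by rw [show a = dist B C from rfl, dist_eq_norm,
        show B - C = u - v by rw [hu, hv]; abel, norm_sub_rev],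
      InnerProductGeometry.cos_angle_mul_norm_mul_norm]
    simp only [inner_neg_left, inner_sub_right, real_inner_self_eq_norm_sq]
    simp only [real_inner_comm v u, hp, hq, hr]
    ring
  have hsinγ : Real.sin γ * (b * a) = t := by
    rw [hγeq, show b = ‖-v‖ by rw [norm_neg, hbv],
      show a = ‖u - v‖ by rw [show a = dist B C from rfl, dist_eq_norm,
        show B - C = u - v by rw [hu, hv]; abel],
      InnerProductGeometry.sin_angle_mul_norm_mul_norm, htdef]
    congr 1
    simp only [inner_neg_left, inner_neg_right, inner_sub_left, inner_sub_right,
      real_inner_self_eq_norm_sq, neg_neg, neg_sub]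
    simp only [real_inner_comm v u, hp, hq, hr]
    ring
  have hcosγ : Real.cos γ * (b * a) = q - r := by
    rw [hγeq, show b = ‖-v‖ by rw [norm_neg, hbv],
      show a = ‖u - v‖ by rw [show a = dist B C from rfl, dist_eq_norm,
        show B - C = u - v by rw [hu, hv]; abel],
      InnerProductGeometry.cos_angle_mul_norm_mul_norm]
    simp only [inner_neg_left, inner_sub_right, real_inner_self_eq_norm_sq]
    simp only [real_inner_comm v u, hp, hq, hr]
    ring
  -- positivity of t
  have hsinαpos : 0 < Real.sin α := sin_pos_of_not_collinear (by
    rwa [Set.insert_comm] at hncol)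
  have htpos : 0 < t := by
    rw [← hsinα]; exact mul_pos hsinαpos (mul_pos hcpos hbpos)
  have hpqr : 0 < p*q - r^2 := Real.sqrt_pos.1 (htdef ▸ htpos)
  have ht2 : t^2 = p*q - r^2 := Real.sq_sqrt hpqr.le
  have hs3 : s^2 = 3 := Real.sq_sqrt (by norm_num)
  have hspos : 0 < s := by rw [hsdef]; positivity
  -- the scaled weights
  set K : ℝ := 2*(a*(b*c)) with hK
  have hKpos : 0 < K := by
    rw [hK]; exact mul_pos two_pos (mul_pos hapos (mul_pos hbpos hcpos))
  have hwAd : wA = a * Real.sin (α + π/3) := rfl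
  have hwBd : wB = b * Real.sin (β + π/3) := rfl
  have hwCd : wC = c * Real.sin (γ + π/3) := rfl
  have hwA : K * wA = (p + q - 2*r)*(t + s*r) := by
    rw [hwAd, Real.sin_add, Real.cos_pi_div_three, Real.sin_pi_div_three, ← hsdef]
    linear_combination a^2*hsinα + (a^2*s)*hcosα + (t + s*r)*ha2
  have hwB : K * wB = q*(t + s*(p - r)) := by
    rw [hwBd, Real.sin_add, Real.cos_pi_div_three, Real.sin_pi_div_three, ← hsdef]
    linear_combination b^2*hsinβ + (b^2*s)*hcosβ + (t + s*(p - r))*hb2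
  have hwC : K * wC = p*(t + s*(q - r)) := by
    rw [hwCd, Real.sin_add, Real.cos_pi_div_three, Real.sin_pi_div_three, ← hsdef]
    linear_combination c^2*hsinγ + (c^2*s)*hcosγ + (t + s*(q - r))*hc2
  -- positivity of the total weight
  have hune : u ≠ 0 := by rw [hu, sub_ne_zero]; exact fun h => hAB h.symm
  have hppos : 0 < p := by rw [hp]; exact pow_pos (norm_pos_iff.mpr hune) 2
  have hqpos : 0 < q := by
    have hvne : v ≠ 0 := by rw [hv, sub_ne_zero]; exact fun h => hAC h.symm
    rw [hq]; exact pow_pos (norm_pos_iff.mpr hvne) 2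
  have hpq_r : 0 < p + q - r := aux_pqr hppos hqpos hpqr
  have hKW : K * (wA + wB + wC) = 2*t*(p + q - r) + 2*s*t^2 := by
    linear_combination hwA + hwB + hwC - 2*s*ht2
  have hWpos : 0 < wA + wB + wC := by
    refine aux_pos hKpos ?_
    rw [hKW]
    have h1 := mul_pos (mul_pos two_pos htpos) hpq_r
    have h2 := mul_pos (mul_pos two_pos hspos) (pow_pos htpos 2)
    linarith
  have hWne : wA + wB + wC ≠ 0 := ne_of_gt hWpos
  have hKne : K^2 ≠ 0 := pow_ne_zero 2 (ne_of_gt hKpos)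
  -- decomposition of X relative to the three vertices
  have hXdef : X = (wA + wB + wC)⁻¹ • (wA • A + wB • B + wC • C) := rfl
  have hXA : X - A = (wA+wB+wC)⁻¹ • (wB • u + wC • v) := by
    rw [hXdef, hu, hv]
    match_scalars <;> (field_simp; try ring)
  have hXB : X - B = (wA+wB+wC)⁻¹ • ((-(wA+wC)) • u + wC • v) := by
    rw [hXdef, hu, hv]
    match_scalars <;> (field_simp; try ring)
  have hXC : X - C = (wA+wB+wC)⁻¹ • (wB • u + (-(wA+wB)) • v) := by
    rw [hXdef, hu, hv]
    match_scalars <;> (field_simp; try ring)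
  have hA2 : dist X A ^ 2
      = ((wA+wB+wC)⁻¹)^2 * (wB^2*p + 2*(wB*wC)*r + wC^2*q) := by
    rw [dist_eq_norm, hXA, norm_smul, mul_pow, normsq2]
    simp only [hp, hq, hr, Real.norm_eq_abs, sq_abs]
  have hB2 : dist X B ^ 2
      = ((wA+wB+wC)⁻¹)^2 * ((-(wA+wC))^2*p + 2*((-(wA+wC))*wC)*r + wC^2*q) := by
    rw [dist_eq_norm, hXB, norm_smul, mul_pow, normsq2]
    simp only [hp, hq, hr, Real.norm_eq_abs, sq_abs]
  have hC2 : dist X C ^ 2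
      = ((wA+wB+wC)⁻¹)^2 * (wB^2*p + 2*(wB*(-(wA+wB)))*r + (-(wA+wB))^2*q) := by
    rw [dist_eq_norm, hXC, norm_smul, mul_pow, normsq2]
    simp only [hp, hq, hr, Real.norm_eq_abs, sq_abs]
  refine ⟨hWpos, ?_, ?_⟩
  · -- a * dist X A = b * dist X B
    have hE1 : a^2*(wB^2*p + 2*(wB*wC)*r + wC^2*q)
        = b^2*((-(wA+wC))^2*p + 2*((-(wA+wC))*wC)*r + wC^2*q) := by
      apply mul_left_cancel₀ hKne
      have e1 : K^2*(a^2*(wB^2*p + 2*(wB*wC)*r + wC^2*q))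
          = a^2*((K*wB)^2*p + 2*((K*wB)*(K*wC))*r + (K*wC)^2*q) := by ring
      have e2 : K^2*(b^2*((-(wA+wC))^2*p + 2*((-(wA+wC))*wC)*r + wC^2*q))
          = b^2*((K*wA+K*wC)^2*p - 2*((K*wA+K*wC)*(K*wC))*r + (K*wC)^2*q) := by ring
      rw [e1, e2, hwA, hwB, hwC, ha2, hb2]
      linear_combination ((-12)*p*q*r^2 + 6*p*q^2*r + 12*p^2*q*r + (-3)*p^2*q^2 + (-3)*p^3*q) * ht2
        + ((-4)*p*q*r^4 + 2*p*q^2*r^3 + 4*p^2*q*r^3 + 3*p^2*q^2*r^2 + (-2)*p^2*q^3*r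
          + (-1)*p^3*q*r^2 + (-4)*p^3*q^2*r + p^3*q^3 + p^4*q^2) * hs3
    have hsq : (a * dist X A)^2 = (b * dist X B)^2 := by
      rw [mul_pow, mul_pow, hA2, hB2]
      linear_combination ((wA+wB+wC)⁻¹)^2 * hE1
    have h1 : (0:ℝ) ≤ a * dist X A := mul_nonneg hapos.le dist_nonneg
    have h2 : (0:ℝ) ≤ b * dist X B := mul_nonneg hbpos.le dist_nonneg
    rw [← Real.sqrt_sq h1, ← Real.sqrt_sq h2, hsq]
  · -- b * dist X B = c * dist X C
    have hE2 : b^2*((-(wA+wC))^2*p + 2*((-(wA+wC))*wC)*r + wC^2*q)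
        = c^2*(wB^2*p + 2*(wB*(-(wA+wB)))*r + (-(wA+wB))^2*q) := by
      apply mul_left_cancel₀ hKne
      have e2 : K^2*(b^2*((-(wA+wC))^2*p + 2*((-(wA+wC))*wC)*r + wC^2*q))
          = b^2*((K*wA+K*wC)^2*p - 2*((K*wA+K*wC)*(K*wC))*r + (K*wC)^2*q) := by ring
      have e3 : K^2*(c^2*(wB^2*p + 2*(wB*(-(wA+wB)))*r + (-(wA+wB))^2*q))
          = c^2*((K*wB)^2*p - 2*((K*wB)*(K*wA+K*wB))*r + (K*wA+K*wB)^2*q) := by ring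
      rw [e2, e3, hwA, hwB, hwC, hb2, hc2]
      linear_combination (6*p*q^2*r + (-3)*p*q^3 + (-6)*p^2*q*r + 3*p^3*q) * ht2
        + (2*p*q^2*r^3 + (-1)*p*q^3*r^2 + (-2)*p^2*q*r^3 + (-2)*p^2*q^3*r + p^2*q^4
          + p^3*q*r^2 + 2*p^3*q^2*r + (-1)*p^4*q^2) * hs3
    have hsq : (b * dist X B)^2 = (c * dist X C)^2 := by
      rw [mul_pow, mul_pow, hB2, hC2]
      linear_combination ((wA+wB+wC)⁻¹)^2 * hE2
    have h1 : (0:ℝ) ≤ b * dist X B := mul_nonneg hbpos.le dist_nonneg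
    have h2 : (0:ℝ) ≤ c * dist X C := mul_nonneg hcpos.le dist_nonneg
    rw [← Real.sqrt_sq h1, ← Real.sqrt_sq h2, hsq]
end

section
/- Let A, B, C be three affinely independent points in the Euclidean plane, let a = dist B C, b = dist A C, c = dist A B be the side lengths, and let α = ∠ B A C, β = ∠ A B C, γ = ∠ A C B be the (unoriented) interior angles. Define the barycentric weights wA = a * Real.sin (α - π/3), wB = b * Real.sin (β - π/3), wC = c * Real.sin (γ - π/3), and assume wA + wB + wC ≠ 0. Then the point X = (wA + wB + wC)⁻¹ • (wA • A + wB • B + wC • C) (the affine combination of A, B, C with these weights, the points being regarded as vectors of EuclideanSpace ℝ (Fin 2)) satisfies a * dist X A = b * dist X B and b * dist X B = c * dist X C. -/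
open Real EuclideanGeometry RealInnerProductSpace

private lemma expand_norm_sq (p q : ℝ) (w z : EuclideanSpace ℝ (Fin 2)) :
    ‖p • w + q • z‖ ^ 2 = p ^ 2 * ⟪w, w⟫ + 2 * p * q * ⟪w, z⟫ + q ^ 2 * ⟪z, z⟫ := by
  rw [← real_inner_self_eq_norm_sq]
  simp only [inner_add_left, inner_add_right, real_inner_smul_left, real_inner_smul_right]
  rw [real_inner_comm z w]
  ring

set_option maxHeartbeats 2000000 in
/-- The second isodynamic point as a barycentric combination with weights
`a·sin(α - π/3) : b·sin(β - π/3) : c·sin(γ - π/3)`, when the weight sum is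
nonzero. -/
theorem stmt_6 (A B C : EuclideanSpace ℝ (Fin 2))
    (hABC : AffineIndependent ℝ ![A, B, C]) :
    let a := dist B C
    let b := dist A C
    let c := dist A B
    let α := ∠ B A C
    let β := ∠ A B C
    let γ := ∠ A C B
    let wA := a * Real.sin (α - π / 3)
    let wB := b * Real.sin (β - π / 3)
    let wC := c * Real.sin (γ - π / 3)
    let X := (wA + wB + wC)⁻¹ • (wA • A + wB • B + wC • C)
    wA + wB + wC ≠ 0 →
      a * dist X A = b * dist X B ∧ b * dist X B = c * dist X C := by
  intro a b c α β γ wA wB wC X hs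
  have hadef : a = dist B C := rfl
  have hbdef : b = dist A C := rfl
  have hcdef : c = dist A B := rfl
  have hwAdef : wA = a * Real.sin (α - π / 3) := rfl
  have hwBdef : wB = b * Real.sin (β - π / 3) := rfl
  have hwCdef : wC = c * Real.sin (γ - π / 3) := rfl
  have hXdef : X = (wA + wB + wC)⁻¹ • (wA • A + wB • B + wC • C) := rfl
  have hα : α = InnerProductGeometry.angle (B - A) (C - A) := rfl
  have hβ : β = InnerProductGeometry.angle (A - B) (C - B) := rfl
  have hγ : γ = InnerProductGeometry.angle (A - C) (B - C) := rfl
  clear_value a b c α β γ wA wB wC X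
  -- distinctness and positivity
  have hinj := hABC.injective
  have hAB : A ≠ B := by
    intro h
    have h01 : (0 : Fin 3) = 1 := hinj (by simpa using h)
    exact absurd h01 (by decide)
  have hAC : A ≠ C := by
    intro h
    have h02 : (0 : Fin 3) = 2 := hinj (by simpa using h)
    exact absurd h02 (by decide)
  have hBC : B ≠ C := by
    intro h
    have h12 : (1 : Fin 3) = 2 := hinj (by simpa using h)
    exact absurd h12 (by decide)
  have ha : 0 < a := by rw [hadef]; exact dist_pos.mpr hBC
  have hb : 0 < b := by rw [hbdef]; exact dist_pos.mpr hAC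
  have hc : 0 < c := by rw [hcdef]; exact dist_pos.mpr hAB
  -- norm facts
  have hnBA : ‖B - A‖ = c := by rw [← dist_eq_norm, dist_comm]; exact hcdef.symm
  have hnAB : ‖A - B‖ = c := by rw [← dist_eq_norm]; exact hcdef.symm
  have hnCA : ‖C - A‖ = b := by rw [← dist_eq_norm, dist_comm]; exact hbdef.symm
  have hnAC : ‖A - C‖ = b := by rw [← dist_eq_norm]; exact hbdef.symm
  have hnCB : ‖C - B‖ = a := by rw [← dist_eq_norm, dist_comm]; exact hadef.symm
  have hnBC : ‖B - C‖ = a := by rw [← dist_eq_norm]; exact hadef.symm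
  set t : ℝ := (c ^ 2 + b ^ 2 - a ^ 2) / 2 with htdef
  have ha2 : a ^ 2 = c ^ 2 + b ^ 2 - 2 * t := by rw [htdef]; ring
  -- inner product facts
  have hiAA : ⟪B - A, B - A⟫ = c ^ 2 := by rw [real_inner_self_eq_norm_sq, hnBA]
  have hiAA' : ⟪C - A, C - A⟫ = b ^ 2 := by rw [real_inner_self_eq_norm_sq, hnCA]
  have hiBB : ⟪A - B, A - B⟫ = c ^ 2 := by rw [real_inner_self_eq_norm_sq, hnAB]
  have hiBB' : ⟪C - B, C - B⟫ = a ^ 2 := by rw [real_inner_self_eq_norm_sq, hnCB]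
  have hiCC : ⟪A - C, A - C⟫ = b ^ 2 := by rw [real_inner_self_eq_norm_sq, hnAC]
  have hiCC' : ⟪B - C, B - C⟫ = a ^ 2 := by rw [real_inner_self_eq_norm_sq, hnBC]
  have hiA : ⟪B - A, C - A⟫ = t := by
    have h := norm_sub_sq_real (B - A) (C - A)
    rw [show (B - A) - (C - A) = B - C from by abel, hnBC, hnBA, hnCA] at h
    rw [htdef]; linarith
  have hiB : ⟪A - B, C - B⟫ = c ^ 2 - t := by
    have h := norm_sub_sq_real (A - B) (C - B)
    rw [show (A - B) - (C - B) = A - C from by abel, hnAC, hnAB, hnCB] at h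
    rw [htdef]; linarith
  have hiC : ⟪A - C, B - C⟫ = b ^ 2 - t := by
    have h := norm_sub_sq_real (A - C) (B - C)
    rw [show (A - C) - (B - C) = A - B from by abel, hnAB, hnAC, hnBC] at h
    rw [htdef]; linarith
  -- the quantity Q = b*c*sin α  and r = √3
  set r : ℝ := Real.sqrt 3 with hrdef
  have hr3 : r ^ 2 = 3 := Real.sq_sqrt (by norm_num)
  have htle : t ^ 2 ≤ c ^ 2 * b ^ 2 := by
    have h := real_inner_mul_inner_self_le (B - A) (C - A)
    rw [hiA, hiAA, hiAA'] at h
    nlinarith [h]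
  set Q : ℝ := Real.sqrt (c ^ 2 * b ^ 2 - t ^ 2) with hQdef
  have hQ2 : Q ^ 2 = c ^ 2 * b ^ 2 - t ^ 2 := Real.sq_sqrt (by linarith)
  have hsA : Real.sin α * (c * b) = Q := by
    have h := InnerProductGeometry.sin_angle_mul_norm_mul_norm (B - A) (C - A)
    rw [hnBA, hnCA, hiAA, hiAA', hiA, ← hα,
      show c ^ 2 * b ^ 2 - t * t = c ^ 2 * b ^ 2 - t ^ 2 from by ring, ← hQdef] at h
    exact h
  have hcA : Real.cos α * (c * b) = t := by
    have h := InnerProductGeometry.cos_angle_mul_norm_mul_norm (B - A) (C - A)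
    rw [hnBA, hnCA, hiA, ← hα] at h
    exact h
  have hsB : Real.sin β * (c * a) = Q := by
    have h := InnerProductGeometry.sin_angle_mul_norm_mul_norm (A - B) (C - B)
    rw [hnAB, hnCB, hiBB, hiBB', hiB, ← hβ,
      show c ^ 2 * a ^ 2 - (c ^ 2 - t) * (c ^ 2 - t) = c ^ 2 * b ^ 2 - t ^ 2 from by
        linear_combination c ^ 2 * ha2, ← hQdef] at h
    exact h
  have hcB : Real.cos β * (c * a) = c ^ 2 - t := by
    have h := InnerProductGeometry.cos_angle_mul_norm_mul_norm (A - B) (C - B)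
    rw [hnAB, hnCB, hiB, ← hβ] at h
    exact h
  have hsC : Real.sin γ * (b * a) = Q := by
    have h := InnerProductGeometry.sin_angle_mul_norm_mul_norm (A - C) (B - C)
    rw [hnAC, hnBC, hiCC, hiCC', hiC, ← hγ,
      show b ^ 2 * a ^ 2 - (b ^ 2 - t) * (b ^ 2 - t) = c ^ 2 * b ^ 2 - t ^ 2 from by
        linear_combination b ^ 2 * ha2, ← hQdef] at h
    exact h
  have hcC : Real.cos γ * (b * a) = b ^ 2 - t := by
    have h := InnerProductGeometry.cos_angle_mul_norm_mul_norm (A - C) (B - C)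
    rw [hnAC, hnBC, hiC, ← hγ] at h
    exact h
  -- weights in polynomial form
  have habc : (2 : ℝ) * a * b * c ≠ 0 := by positivity
  have hwA' : wA = (2 * a * b * c)⁻¹ * (a ^ 2 * (Q - r * t)) := by
    rw [hwAdef, Real.sin_sub, Real.cos_pi_div_three, Real.sin_pi_div_three, ← hrdef,
      eq_inv_mul_iff_mul_eq₀ habc]
    linear_combination a ^ 2 * hsA - a ^ 2 * r * hcA
  have hwB' : wB = (2 * a * b * c)⁻¹ * (b ^ 2 * (Q - r * (c ^ 2 - t))) := by
    rw [hwBdef, Real.sin_sub, Real.cos_pi_div_three, Real.sin_pi_div_three, ← hrdef,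
      eq_inv_mul_iff_mul_eq₀ habc]
    linear_combination b ^ 2 * hsB - b ^ 2 * r * hcB
  have hwC' : wC = (2 * a * b * c)⁻¹ * (c ^ 2 * (Q - r * (b ^ 2 - t))) := by
    rw [hwCdef, Real.sin_sub, Real.cos_pi_div_three, Real.sin_pi_div_three, ← hrdef,
      eq_inv_mul_iff_mul_eq₀ habc]
    linear_combination c ^ 2 * hsC - c ^ 2 * r * hcC
  -- displacement vectors from X
  have hXA1 : X - A = (wA + wB + wC)⁻¹ • (wB • (B - A) + wC • (C - A)) := by
    rw [hXdef]; match_scalars <;> (field_simp; try ring)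
  have hXB1 : X - B = (wA + wB + wC)⁻¹ • (wA • (A - B) + wC • (C - B)) := by
    rw [hXdef]; match_scalars <;> (field_simp; try ring)
  have hXC1 : X - C = (wA + wB + wC)⁻¹ • (wA • (A - C) + wB • (B - C)) := by
    rw [hXdef]; match_scalars <;> (field_simp; try ring)
  have hvA : wB • (B - A) + wC • (C - A) = (2 * a * b * c)⁻¹ •
      ((b ^ 2 * (Q - r * (c ^ 2 - t))) • (B - A) + (c ^ 2 * (Q - r * (b ^ 2 - t))) • (C - A)) := by
    rw [hwB', hwC']; match_scalars <;> ring
  have hvB : wA • (A - B) + wC • (C - B) = (2 * a * b * c)⁻¹ •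
      ((a ^ 2 * (Q - r * t)) • (A - B) + (c ^ 2 * (Q - r * (b ^ 2 - t))) • (C - B)) := by
    rw [hwA', hwC']; match_scalars <;> ring
  have hvC : wA • (A - C) + wB • (B - C) = (2 * a * b * c)⁻¹ •
      ((a ^ 2 * (Q - r * t)) • (A - C) + (b ^ 2 * (Q - r * (c ^ 2 - t))) • (B - C)) := by
    rw [hwA', hwB']; match_scalars <;> ring
  have hXA : X - A = ((wA + wB + wC)⁻¹ * (2 * a * b * c)⁻¹) •
      ((b ^ 2 * (Q - r * (c ^ 2 - t))) • (B - A) + (c ^ 2 * (Q - r * (b ^ 2 - t))) • (C - A)) := by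
    rw [hXA1, hvA, smul_smul]
  have hXB : X - B = ((wA + wB + wC)⁻¹ * (2 * a * b * c)⁻¹) •
      ((a ^ 2 * (Q - r * t)) • (A - B) + (c ^ 2 * (Q - r * (b ^ 2 - t))) • (C - B)) := by
    rw [hXB1, hvB, smul_smul]
  have hXC : X - C = ((wA + wB + wC)⁻¹ * (2 * a * b * c)⁻¹) •
      ((a ^ 2 * (Q - r * t)) • (A - C) + (b ^ 2 * (Q - r * (c ^ 2 - t))) • (B - C)) := by
    rw [hXC1, hvC, smul_smul]
  set k : ℝ := |(wA + wB + wC)⁻¹ * (2 * a * b * c)⁻¹| with hkdef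
  set N1 : ℝ := ‖(b ^ 2 * (Q - r * (c ^ 2 - t))) • (B - A) + (c ^ 2 * (Q - r * (b ^ 2 - t))) • (C - A)‖ with hN1def
  set N2 : ℝ := ‖(a ^ 2 * (Q - r * t)) • (A - B) + (c ^ 2 * (Q - r * (b ^ 2 - t))) • (C - B)‖ with hN2def
  set N3 : ℝ := ‖(a ^ 2 * (Q - r * t)) • (A - C) + (b ^ 2 * (Q - r * (c ^ 2 - t))) • (B - C)‖ with hN3def
  have hdA : dist X A = k * N1 := by
    rw [dist_eq_norm, hXA, norm_smul, Real.norm_eq_abs, ← hkdef, ← hN1def]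
  have hdB : dist X B = k * N2 := by
    rw [dist_eq_norm, hXB, norm_smul, Real.norm_eq_abs, ← hkdef, ← hN2def]
  have hdC : dist X C = k * N3 := by
    rw [dist_eq_norm, hXC, norm_smul, Real.norm_eq_abs, ← hkdef, ← hN3def]
  have hN1sq : N1 ^ 2 = (b ^ 2 * (Q - r * (c ^ 2 - t))) ^ 2 * c ^ 2
      + 2 * (b ^ 2 * (Q - r * (c ^ 2 - t))) * (c ^ 2 * (Q - r * (b ^ 2 - t))) * t
      + (c ^ 2 * (Q - r * (b ^ 2 - t))) ^ 2 * b ^ 2 := by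
    rw [hN1def, expand_norm_sq, hiAA, hiA, hiAA']
  have hN2sq : N2 ^ 2 = (a ^ 2 * (Q - r * t)) ^ 2 * c ^ 2
      + 2 * (a ^ 2 * (Q - r * t)) * (c ^ 2 * (Q - r * (b ^ 2 - t))) * (c ^ 2 - t)
      + (c ^ 2 * (Q - r * (b ^ 2 - t))) ^ 2 * a ^ 2 := by
    rw [hN2def, expand_norm_sq, hiBB, hiB, hiBB']
  have hN3sq : N3 ^ 2 = (a ^ 2 * (Q - r * t)) ^ 2 * b ^ 2
      + 2 * (a ^ 2 * (Q - r * t)) * (b ^ 2 * (Q - r * (c ^ 2 - t))) * (b ^ 2 - t)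
      + (b ^ 2 * (Q - r * (c ^ 2 - t))) ^ 2 * a ^ 2 := by
    rw [hN3def, expand_norm_sq, hiCC, hiC, hiCC']
  have hN1nn : 0 ≤ N1 := norm_nonneg _
  have hN2nn : 0 ≤ N2 := norm_nonneg _
  have hN3nn : 0 ≤ N3 := norm_nonneg _
  have key1 : (a * N1) ^ 2 = (b * N2) ^ 2 := by
    rw [mul_pow, mul_pow, hN1sq, hN2sq]
    linear_combination
      ((-1) * c ^ 2 * b ^ 2 * Q ^ 2 * a ^ 2 + 2 * c ^ 2 * b ^ 2 * t * Q * r * a ^ 2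
        + 6 * c ^ 2 * b ^ 2 * t * Q ^ 2 - c ^ 2 * b ^ 2 * t ^ 2 * r ^ 2 * a ^ 2
        + 2 * c ^ 2 * b ^ 2 * t ^ 3 * r ^ 2 - 3 * c ^ 4 * b ^ 2 * Q ^ 2
        - c ^ 4 * b ^ 2 * t ^ 2 * r ^ 2 - 2 * c ^ 4 * b ^ 4 * t * r ^ 2
        + c ^ 6 * b ^ 4 * r ^ 2) * ha2
      + ((-12) * c ^ 2 * b ^ 2 * t ^ 2 + 6 * c ^ 2 * b ^ 4 * t + 12 * c ^ 4 * b ^ 2 * t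
        - 3 * c ^ 4 * b ^ 4 - 3 * c ^ 6 * b ^ 2) * hQ2
      + ((-4) * c ^ 2 * b ^ 2 * t ^ 4 + 2 * c ^ 2 * b ^ 4 * t ^ 3 + 4 * c ^ 4 * b ^ 2 * t ^ 3
        + 3 * c ^ 4 * b ^ 4 * t ^ 2 - 2 * c ^ 4 * b ^ 6 * t - c ^ 6 * b ^ 2 * t ^ 2
        - 4 * c ^ 6 * b ^ 4 * t + c ^ 6 * b ^ 6 + c ^ 8 * b ^ 4) * hr3
  have key2 : (b * N2) ^ 2 = (c * N3) ^ 2 := by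
    rw [mul_pow, mul_pow, hN2sq, hN3sq]
    linear_combination
      ((-3) * c ^ 2 * b ^ 4 * Q ^ 2 - c ^ 2 * b ^ 4 * t ^ 2 * r ^ 2
        + 3 * c ^ 4 * b ^ 2 * Q ^ 2 + c ^ 4 * b ^ 2 * t ^ 2 * r ^ 2
        + c ^ 4 * b ^ 6 * r ^ 2 - c ^ 6 * b ^ 4 * r ^ 2) * ha2
      + (6 * c ^ 2 * b ^ 4 * t - 3 * c ^ 2 * b ^ 6 - 6 * c ^ 4 * b ^ 2 * t
        + 3 * c ^ 6 * b ^ 2) * hQ2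
      + (2 * c ^ 2 * b ^ 4 * t ^ 3 - c ^ 2 * b ^ 6 * t ^ 2 - 2 * c ^ 4 * b ^ 2 * t ^ 3
        - 2 * c ^ 4 * b ^ 6 * t + c ^ 4 * b ^ 8 + c ^ 6 * b ^ 2 * t ^ 2
        + 2 * c ^ 6 * b ^ 4 * t - c ^ 8 * b ^ 4) * hr3
  have hg1 : a * N1 = b * N2 := by
    have h1 : 0 ≤ a * N1 := by positivity
    have h2 : 0 ≤ b * N2 := by positivity
    calc a * N1 = √((a * N1) ^ 2) := (Real.sqrt_sq h1).symm
      _ = √((b * N2) ^ 2) := by rw [key1]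
      _ = b * N2 := Real.sqrt_sq h2
  have hg2 : b * N2 = c * N3 := by
    have h1 : 0 ≤ b * N2 := by positivity
    have h2 : 0 ≤ c * N3 := by positivity
    calc b * N2 = √((b * N2) ^ 2) := (Real.sqrt_sq h1).symm
      _ = √((c * N3) ^ 2) := by rw [key2]
      _ = c * N3 := Real.sqrt_sq h2
  constructor
  · rw [hdA, hdB]; linear_combination k * hg1
  · rw [hdB, hdC]; linear_combination k * hg2
end

section
/- Let A, B, C be three affinely independent points in the Euclidean plane. Then there exist a point P with P ≠ A, P ≠ B, P ≠ C, and a radius R > 0, such that the images A' = EuclideanGeometry.inversion P R A, B' = EuclideanGeometry.inversion P R B, C' = EuclideanGeometry.inversion P R C form an equilateral triangle: dist A' B' = dist B' C', dist B' C' = dist C' A', and dist A' B' ≠ 0. -/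
open EuclideanGeometry Complex

lemma inversion_map_li {E F : Type*} [NormedAddCommGroup E] [InnerProductSpace ℝ E]
    [NormedAddCommGroup F] [InnerProductSpace ℝ F] (f : E ≃ₗᵢ[ℝ] F) (c : E) (R : ℝ) (p : E) :
    f (EuclideanGeometry.inversion c R p) = EuclideanGeometry.inversion (f c) R (f p) := by
  simp only [EuclideanGeometry.inversion, vsub_eq_sub, vadd_eq_add, map_add,
    LinearIsometryEquiv.map_smul, map_sub, f.dist_map]

lemma key (μ a b c : ℂ) (hμ : μ ^ 2 + μ + 1 = 0) (hμ1 : ‖μ‖ = 1)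
    (hab : a ≠ b) (hac : a ≠ c) (hbc : b ≠ c)
    (hd : a + μ * b + μ ^ 2 * c ≠ 0) :
    ∃ P : ℂ, P ≠ a ∧ P ≠ b ∧ P ≠ c ∧
      ‖a - b‖ * ‖c - P‖ = ‖b - c‖ * ‖a - P‖ ∧
      ‖c - a‖ * ‖b - P‖ = ‖b - c‖ * ‖a - P‖ := by
  have hμ0 : μ ≠ 0 := by
    intro h; rw [h] at hμ; norm_num at hμ
  have hμ20 : μ ^ 2 ≠ 0 := pow_ne_zero 2 hμ0
  set P : ℂ := -(b * c + μ * a * c + μ ^ 2 * a * b) / (a + μ * b + μ ^ 2 * c) with hP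
  have hPd : P * (a + μ * b + μ ^ 2 * c) = -(b * c + μ * a * c + μ ^ 2 * a * b) := by
    rw [hP]; exact div_mul_cancel₀ _ hd
  have hF : (b - P) * (c - P) + μ * (a - P) * (c - P) + μ ^ 2 * (a - P) * (b - P) = 0 := by
    linear_combination hPd + (P ^ 2 - P * (a + b + c)) * hμ
  clear_value P
  clear hPd hP hd
  have hPa : P ≠ a := by
    rintro rfl
    simp only [sub_self, zero_mul, mul_zero, add_zero, mul_eq_zero, sub_eq_zero,
      hμ0, hμ20, false_or, or_false, zero_add] at hF
    rcases hF with h | h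
    · exact hab h.symm
    · exact hac h.symm
  have hPb : P ≠ b := by
    rintro rfl
    simp only [sub_self, zero_mul, mul_zero, add_zero, mul_eq_zero, sub_eq_zero,
      hμ0, hμ20, false_or, or_false, zero_add] at hF
    rcases hF with h | h
    · exact hab h
    · exact hbc h.symm
  have hPc : P ≠ c := by
    rintro rfl
    simp only [sub_self, zero_mul, mul_zero, add_zero, mul_eq_zero, sub_eq_zero,
      hμ0, hμ20, false_or, or_false, zero_add] at hF
    rcases hF with h | h
    · exact hac h
    · exact hbc h
  refine ⟨P, hPa, hPb, hPc, ?_, ?_⟩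
  · have h1 : (a - b) * (c - P) = μ ^ 2 * ((b - c) * (a - P)) := by
      linear_combination -hF + ((a - P) * (c - P)) * hμ
    have := congrArg norm h1
    rwa [norm_mul, norm_mul, norm_mul, norm_pow, hμ1, one_pow, one_mul] at this
  · have h2 : (c - a) * (b - P) = μ * ((b - c) * (a - P)) := by
      linear_combination hF - ((a - P) * (b - P)) * hμ
    have := congrArg norm h2
    rwa [norm_mul, norm_mul, norm_mul, hμ1, one_mul] at this

set_option maxHeartbeats 1000000 in
/-- Every triangle may be carried to an equilateral triangle by an inversion
(centered at a point distinct from the three vertices). -/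
theorem stmt_7 (A B C : EuclideanSpace ℝ (Fin 2))
    (hABC : AffineIndependent ℝ ![A, B, C]) :
    ∃ (P : EuclideanSpace ℝ (Fin 2)) (R : ℝ), 0 < R ∧
      P ≠ A ∧ P ≠ B ∧ P ≠ C ∧
      (let A' := EuclideanGeometry.inversion P R A
       let B' := EuclideanGeometry.inversion P R B
       let C' := EuclideanGeometry.inversion P R C
       dist A' B' = dist B' C' ∧ dist B' C' = dist C' A' ∧ dist A' B' ≠ 0) := by
  have hAB : A ≠ B := by
    intro h
    exact absurd (hABC.injective (show ![A, B, C] 0 = ![A, B, C] 1 by simpa using h))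
      (by decide)
  have hAC : A ≠ C := by
    intro h
    exact absurd (hABC.injective (show ![A, B, C] 0 = ![A, B, C] 2 by simpa using h))
      (by decide)
  have hBC : B ≠ C := by
    intro h
    exact absurd (hABC.injective (show ![A, B, C] 1 = ![A, B, C] 2 by simpa using h))
      (by decide)
  let e : EuclideanSpace ℝ (Fin 2) ≃ₗᵢ[ℝ] ℂ := Complex.orthonormalBasisOneI.repr.symm
  set a := e A with ha
  set b := e B with hb
  set c := e C with hc
  have hab : a ≠ b := fun h => hAB (e.injective h)
  have hac : a ≠ c := fun h => hAC (e.injective h)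
  have hbc : b ≠ c := fun h => hBC (e.injective h)
  -- a primitive cube root of unity
  have h3 : (Real.sqrt 3 : ℂ) ^ 2 = 3 := by
    norm_cast
    exact Real.sq_sqrt (by norm_num)
  set μ : ℂ := (-1 + Real.sqrt 3 * Complex.I) / 2 with hμdef
  have hμ : μ ^ 2 + μ + 1 = 0 := by
    rw [hμdef]
    linear_combination (-(1 : ℂ) / 4) * h3 + ((Real.sqrt 3 : ℂ) ^ 2 / 4) * Complex.I_sq
  have hμ1 : ‖μ‖ = 1 := by
    have hre : μ.re = -1 / 2 := by simp [hμdef]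
    have him : μ.im = Real.sqrt 3 / 2 := by simp [hμdef]
    have h3' : Real.sqrt 3 ^ 2 = 3 := Real.sq_sqrt (by norm_num)
    have hns : Complex.normSq μ = 1 := by
      rw [Complex.normSq_apply, hre, him]; nlinarith
    rw [Complex.norm_def, hns, Real.sqrt_one]
  have hμ0 : μ ≠ 0 := by intro h; rw [h] at hμ; norm_num at hμ
  obtain ⟨ν, hν, hν1, hd⟩ :
      ∃ ν : ℂ, ν ^ 2 + ν + 1 = 0 ∧ ‖ν‖ = 1 ∧ a + ν * b + ν ^ 2 * c ≠ 0 := by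
    by_cases h : a + μ * b + μ ^ 2 * c ≠ 0
    · exact ⟨μ, hμ, hμ1, h⟩
    · push_neg at h
      refine ⟨μ ^ 2, by linear_combination (μ ^ 2 - μ + 1) * hμ,
        by rw [norm_pow, hμ1, one_pow], fun h2 => ?_⟩
      have hμμ : μ - μ ^ 2 ≠ 0 := by
        intro h'
        have h'' : μ * (1 - μ) = 0 := by linear_combination h'
        rcases mul_eq_zero.1 h'' with h'' | h''
        · exact hμ0 h''
        · have : μ = 1 := (sub_eq_zero.1 h'').symm
          rw [this] at hμ; norm_num at hμ
      have hbc0 : (μ - μ ^ 2) * (b - c) = 0 := by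
        linear_combination h - h2 + c * μ * (μ - 1) * hμ
      rcases mul_eq_zero.1 hbc0 with h' | h'
      · exact hμμ h'
      · exact hbc (sub_eq_zero.1 h')
  obtain ⟨P₀, hP0a, hP0b, hP0c, h1, h2⟩ := key ν a b c hν hν1 hab hac hbc hd
  refine ⟨e.symm P₀, 1, one_pos, ?_, ?_, ?_, ?_⟩
  · intro h; exact hP0a (by simpa [ha] using congrArg e h)
  · intro h; exact hP0b (by simpa [hb] using congrArg e h)
  · intro h; exact hP0c (by simpa [hc] using congrArg e h)
  set P : EuclideanSpace ℝ (Fin 2) := e.symm P₀ with hPdef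
  have heP : e P = P₀ := e.apply_symm_apply P₀
  have hAP : A ≠ P := fun h => hP0a (by rw [← heP, ← h, ← ha])
  have hBP : B ≠ P := fun h => hP0b (by rw [← heP, ← h, ← hb])
  have hCP : C ≠ P := fun h => hP0c (by rw [← heP, ← h, ← hc])
  have hdAP : dist A P = ‖a - P₀‖ := by
    rw [← e.dist_map A P, heP, ← ha, Complex.dist_eq]
  have hdBP : dist B P = ‖b - P₀‖ := by
    rw [← e.dist_map B P, heP, ← hb, Complex.dist_eq]
  have hdCP : dist C P = ‖c - P₀‖ := by
    rw [← e.dist_map C P, heP, ← hc, Complex.dist_eq]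
  have hdAB : dist A B = ‖a - b‖ := by
    rw [← e.dist_map A B, ← ha, ← hb, Complex.dist_eq]
  have hdBC : dist B C = ‖b - c‖ := by
    rw [← e.dist_map B C, ← hb, ← hc, Complex.dist_eq]
  have hdCA : dist C A = ‖c - a‖ := by
    rw [← e.dist_map C A, ← hc, ← ha, Complex.dist_eq]
  have dab := EuclideanGeometry.dist_inversion_inversion hAP hBP 1
  have dbc := EuclideanGeometry.dist_inversion_inversion hBP hCP 1
  have dca := EuclideanGeometry.dist_inversion_inversion hCP hAP 1
  have hu : (0 : ℝ) < ‖a - P₀‖ := by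
    rw [← hdAP]; exact dist_pos.2 hAP
  have hv : (0 : ℝ) < ‖b - P₀‖ := by
    rw [← hdBP]; exact dist_pos.2 hBP
  have hw : (0 : ℝ) < ‖c - P₀‖ := by
    rw [← hdCP]; exact dist_pos.2 hCP
  have hp : (0 : ℝ) < ‖a - b‖ := by
    rw [← hdAB]; exact dist_pos.2 hAB
  refine ⟨?_, ?_, ?_⟩
  · rw [dab, dbc, hdAP, hdBP, hdCP, hdAB, hdBC]
    rw [div_mul_eq_mul_div, div_mul_eq_mul_div, div_eq_div_iff (by positivity) (by positivity)]
    nlinarith [h1, hu.le, hv.le, hw.le]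
  · rw [dbc, dca, hdAP, hdBP, hdCP, hdBC, hdCA]
    rw [div_mul_eq_mul_div, div_mul_eq_mul_div, div_eq_div_iff (by positivity) (by positivity)]
    nlinarith [h2, hu.le, hv.le, hw.le]
  · rw [dab, hdAP, hdBP, hdAB]
    positivity
end

section
/- Let three circles in the Euclidean plane have centers c1, c2, c3 and radii r1, r2, r3 > 0, and be pairwise externally tangent: dist c1 c2 = r1 + r2, dist c2 c3 = r2 + r3, dist c1 c3 = r1 + r3. Let t12 = (r1 + r2)⁻¹ • (r2 • c1 + r1 • c2), t23 = (r2 + r3)⁻¹ • (r3 • c2 + r2 • c3), t13 = (r1 + r3)⁻¹ • (r3 • c1 + r1 • c3) be the three pairwise tangency points. Then there exist a point o and a radius ρ > 0 such that dist o t12 = ρ, dist o t23 = ρ, dist o t13 = ρ, and the circle with center o and radius ρ is orthogonal to all three given circles: dist o c1 ^ 2 = ρ^2 + r1^2, dist o c2 ^ 2 = ρ^2 + r2^2, dist o c3 ^ 2 = ρ^2 + r3^2. -/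
open scoped RealInnerProductSpace

lemma norm_comb (u v : EuclideanSpace ℝ (Fin 2)) (a b : ℝ) :
    ‖a • u + b • v‖ ^ 2 = a^2 * ⟪u, u⟫ + 2*(a*b) * ⟪u, v⟫ + b^2 * ⟪v, v⟫ := by
  rw [← real_inner_self_eq_norm_sq]
  simp only [inner_add_left, inner_add_right, inner_smul_left, inner_smul_right,
    RCLike.conj_to_real, real_inner_comm u v]
  ring

set_option maxHeartbeats 2000000 in
/-- The three tangency points of three mutually externally tangent circles
lie on a common circle orthogonal to all three. -/
theorem stmt_8 (c1 c2 c3 : EuclideanSpace ℝ (Fin 2)) (r1 r2 r3 : ℝ)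
    (hr1 : 0 < r1) (hr2 : 0 < r2) (hr3 : 0 < r3)
    (h12 : dist c1 c2 = r1 + r2) (h23 : dist c2 c3 = r2 + r3)
    (h13 : dist c1 c3 = r1 + r3) :
    let t12 := (r1 + r2)⁻¹ • (r2 • c1 + r1 • c2)
    let t23 := (r2 + r3)⁻¹ • (r3 • c2 + r2 • c3)
    let t13 := (r1 + r3)⁻¹ • (r3 • c1 + r1 • c3)
    ∃ (o : EuclideanSpace ℝ (Fin 2)) (ρ : ℝ), 0 < ρ ∧
      dist o t12 = ρ ∧ dist o t23 = ρ ∧ dist o t13 = ρ ∧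
      dist o c1 ^ 2 = ρ ^ 2 + r1 ^ 2 ∧
      dist o c2 ^ 2 = ρ ^ 2 + r2 ^ 2 ∧
      dist o c3 ^ 2 = ρ ^ 2 + r3 ^ 2 := by
  intro t12 t23 t13
  have hs : (0:ℝ) < r1 + r2 + r3 := by linarith
  have hs' : (r1 + r2 + r3 : ℝ) ≠ 0 := ne_of_gt hs
  have h12' : (r1 + r2 : ℝ) ≠ 0 := by positivity
  have h23' : (r2 + r3 : ℝ) ≠ 0 := by positivity
  have h13' : (r1 + r3 : ℝ) ≠ 0 := by positivity
  set s : ℝ := r1 + r2 + r3 with hsdef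
  set o : EuclideanSpace ℝ (Fin 2) :=
    (2*s)⁻¹ • ((r2+r3) • c1 + (r1+r3) • c2 + (r1+r2) • c3) with hodef
  set ρ : ℝ := Real.sqrt (r1*r2*r3/s) with hρdef
  have hρpos : 0 < ρ := Real.sqrt_pos.mpr (by positivity)
  have hρ2 : ρ^2 = r1*r2*r3/s := Real.sq_sqrt (by positivity)
  set u : EuclideanSpace ℝ (Fin 2) := c2 - c1 with hudef
  set v : EuclideanSpace ℝ (Fin 2) := c3 - c1 with hvdef
  have hu : ⟪u, u⟫ = (r1+r2)^2 := by
    rw [real_inner_self_eq_norm_sq, hudef, ← dist_eq_norm, dist_comm, h12]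
  have hv : ⟪v, v⟫ = (r1+r3)^2 := by
    rw [real_inner_self_eq_norm_sq, hvdef, ← dist_eq_norm, dist_comm, h13]
  have huv : ⟪u, v⟫ = r1^2 + r1*r2 + r1*r3 - r2*r3 := by
    have hw : ⟪u - v, u - v⟫ = (r2+r3)^2 := by
      have : u - v = c2 - c3 := by rw [hudef, hvdef]; abel
      rw [this, real_inner_self_eq_norm_sq, ← dist_eq_norm, h23]
    simp only [inner_sub_left, inner_sub_right] at hw
    rw [real_inner_comm u v, hu, hv] at hw
    linarith
  have sq_to_eq : ∀ x y : EuclideanSpace ℝ (Fin 2), ∀ z : ℝ, 0 ≤ z →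
      dist x y ^ 2 = z ^ 2 → dist x y = z := by
    intro x y z hz h
    nlinarith [dist_nonneg (x := x) (y := y)]
  refine ⟨o, ρ, hρpos, ?_, ?_, ?_, ?_, ?_, ?_⟩
  · apply sq_to_eq _ _ _ hρpos.le
    have e : o - t12 = ((r1+r3)/(2*s) - r1/(r1+r2)) • u + ((r1+r2)/(2*s)) • v := by
      rw [hodef, hudef, hvdef]; show _ = _
      match_scalars <;> field_simp <;> ring
    rw [dist_eq_norm, e, norm_comb, hu, hv, huv, hρ2]
    field_simp
    ring
  · apply sq_to_eq _ _ _ hρpos.le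
    have e : o - t23 = ((r1+r3)/(2*s) - r3/(r2+r3)) • u + ((r1+r2)/(2*s) - r2/(r2+r3)) • v := by
      rw [hodef, hudef, hvdef]; show _ = _
      match_scalars <;> field_simp <;> ring
    rw [dist_eq_norm, e, norm_comb, hu, hv, huv, hρ2]
    field_simp
    ring
  · apply sq_to_eq _ _ _ hρpos.le
    have e : o - t13 = ((r1+r3)/(2*s)) • u + ((r1+r2)/(2*s) - r1/(r1+r3)) • v := by
      rw [hodef, hudef, hvdef]; show _ = _
      match_scalars <;> field_simp <;> ring
    rw [dist_eq_norm, e, norm_comb, hu, hv, huv, hρ2]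
    field_simp
    ring
  · have e : o - c1 = ((r1+r3)/(2*s)) • u + ((r1+r2)/(2*s)) • v := by
      rw [hodef, hudef, hvdef]
      match_scalars <;> field_simp <;> ring
    rw [dist_eq_norm, e, norm_comb, hu, hv, huv, hρ2]
    field_simp
    ring
  · have e : o - c2 = ((r1+r3)/(2*s) - 1) • u + ((r1+r2)/(2*s)) • v := by
      rw [hodef, hudef, hvdef]
      match_scalars <;> field_simp <;> ring
    rw [dist_eq_norm, e, norm_comb, hu, hv, huv, hρ2]
    field_simp
    ring
  · have e : o - c3 = ((r1+r3)/(2*s)) • u + ((r1+r2)/(2*s) - 1) • v := by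
      rw [hodef, hudef, hvdef]
      match_scalars <;> field_simp <;> ring
    rw [dist_eq_norm, e, norm_comb, hu, hv, huv, hρ2]
    field_simp
    ring
end
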